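/- arXiv:1103.0571 — 2 statements merged into one kernel-verified Lean document; each statement's English description precedes it below -/
import Mathlib

section
/- Let G be an optimal allocation path from x to b. Then for any i ≠ s in {1,…,k}, the points x_i and x_s do not belong to the same connected component of G, i.e., there is no finite sequence of edges of G, each traversed in either direction, joining x_i to x_s. -/
open scoped BigOperators RealInnerProductSpace

noncomputable section

attribute [local instance] Classical.propDecidable

/-- Points of the ambient Euclidean space `ℝ^m`. -/
abbrev Pt (m : ℕ) := EuclideanSpace ℝ (Fin m)

/-- A weighted directed graph in `ℝ^m`: a finite vertex set, a finite set of
directed edges (ordered pairs of points, viewed as directed line segments), and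
a weight function. -/
structure WDG (m : ℕ) where
  V : Finset (Pt m)
  E : Finset (Pt m × Pt m)
  w : Pt m × Pt m → ℝ

namespace WDG

variable {m : ℕ}

/-- Edges join distinct vertices of the graph and carry positive weight. -/
def edgesOK (G : WDG m) : Prop :=
  ∀ e ∈ G.E, e.1 ∈ G.V ∧ e.2 ∈ G.V ∧ e.1 ≠ e.2 ∧ 0 < G.w e

/-- The underlying undirected (simple) graph. -/
def undirected (G : WDG m) : SimpleGraph (Pt m) :=
  SimpleGraph.fromRel (fun u v => (u, v) ∈ G.E)

/-- The cost `M_α(G) = Σ_{e ∈ E(G)} w(e)^α · length(e)`. -/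
def cost (α : ℝ) (G : WDG m) : ℝ :=
  ∑ e ∈ G.E, (G.w e) ^ α * dist e.1 e.2

/-- Total weight of edges starting at `v`. -/
def outflow (G : WDG m) (v : Pt m) : ℝ :=
  ∑ e ∈ G.E.filter (fun e => e.1 = v), G.w e

/-- Total weight of edges ending at `v`. -/
def inflow (G : WDG m) (v : Pt m) : ℝ :=
  ∑ e ∈ G.E.filter (fun e => e.2 = v), G.w e

end WDG

/-- Atomic measures are represented as finitely supported functions `ℝ^m →₀ ℝ`
with nonnegative values; `AtomicOn X c` also requires the atoms to lie in `X`. -/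
def AtomicOn {m : ℕ} (X : Set (Pt m)) (c : Pt m →₀ ℝ) : Prop :=
  (∀ z, 0 ≤ c z) ∧ ↑c.support ⊆ X

/-- The mass `m(c)` of an atomic measure. -/
def massOf {m : ℕ} (c : Pt m →₀ ℝ) : ℝ := c.sum fun _ t => t

/-- `G` is a transport path from `a` to `b` inside `X`: its vertices lie in `X`
and contain the atoms of `a` and `b`, its underlying undirected graph has no
cycles, and the balance equation holds at every vertex. -/
def IsTransportPath {m : ℕ} (X : Set (Pt m)) (G : WDG m) (a b : Pt m →₀ ℝ) : Prop :=
  G.edgesOK ∧ ↑G.V ⊆ X ∧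
  (∀ z ∈ a.support, z ∈ G.V) ∧ (∀ z ∈ b.support, z ∈ G.V) ∧
  G.undirected.IsAcyclic ∧
  ∀ v : Pt m, G.outflow v - G.inflow v = a v - b v

/-- `d_α(a,b)`: the minimal cost of a transport path from `a` to `b`. -/
def dCost {m : ℕ} (X : Set (Pt m)) (α : ℝ) (a b : Pt m →₀ ℝ) : ℝ :=
  sInf (WDG.cost α '' {G : WDG m | IsTransportPath X G a b})

/-- An optimal transport path from `a` to `b`. -/
def IsOptimalTP {m : ℕ} (X : Set (Pt m)) (α : ℝ) (G : WDG m) (a b : Pt m →₀ ℝ) : Prop :=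
  IsTransportPath X G a b ∧
    ∀ G' : WDG m, IsTransportPath X G' a b → WDG.cost α G ≤ WDG.cost α G'

/-- The atomic probability measure `b = Σ_j n_j δ_{y_j}` of households. -/
def bMeas {m ℓ : ℕ} (y : Fin ℓ → Pt m) (n : Fin ℓ → ℝ) : Pt m →₀ ℝ :=
  ∑ j, Finsupp.single (y j) (n j)

/-- An allocation path from the factory locations `x` to the households `(y,n)`:
a transport path to `b` from some atomic probability measure supported on the
factory locations. -/
def IsAllocPath {m k ℓ : ℕ} (X : Set (Pt m)) (x : Fin k → Pt m)
    (y : Fin ℓ → Pt m) (n : Fin ℓ → ℝ) (G : WDG m) : Prop :=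
  ∃ a : Pt m →₀ ℝ, (∀ z, 0 ≤ a z) ∧ ↑a.support ⊆ Set.range x ∧ massOf a = 1 ∧
    IsTransportPath X G a (bMeas y n)

/-- An optimal allocation path: it minimizes `M_α` over all allocation paths. -/
def IsOptimalAllocPath {m k ℓ : ℕ} (X : Set (Pt m)) (α : ℝ) (x : Fin k → Pt m)
    (y : Fin ℓ → Pt m) (n : Fin ℓ → ℝ) (G : WDG m) : Prop :=
  IsAllocPath X x y n G ∧
    ∀ G' : WDG m, IsAllocPath X x y n G' → WDG.cost α G ≤ WDG.cost α G'

/-- For an assignment map `S`, the part `b_i = Σ_{j : S(j) = i} n_j δ_{y_j}`. -/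
def bPart {m k ℓ : ℕ} (y : Fin ℓ → Pt m) (n : Fin ℓ → ℝ) (S : Fin ℓ → Fin k)
    (i : Fin k) : Pt m →₀ ℝ :=
  ∑ j ∈ Finset.univ.filter (fun j => S j = i), Finsupp.single (y j) (n j)

/-- The mass `m(b_i) = Σ_{j : S(j) = i} n_j`. -/
def mB {k ℓ : ℕ} (n : Fin ℓ → ℝ) (S : Fin ℓ → Fin k) (i : Fin k) : ℝ :=
  ∑ j ∈ Finset.univ.filter (fun j => S j = i), n j

/-- `E_α(S) = Σ_i d_α(m(b_i) δ_{x_i}, b_i)`. -/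
def Ealpha {m k ℓ : ℕ} (X : Set (Pt m)) (α : ℝ) (x : Fin k → Pt m)
    (y : Fin ℓ → Pt m) (n : Fin ℓ → ℝ) (S : Fin ℓ → Fin k) : ℝ :=
  ∑ i, dCost X α (Finsupp.single (x i) (mB n S i)) (bPart y n S i)

/-- An optimal assignment map minimizes `E_α` over all assignment maps. -/
def IsOptimalAssign {m k ℓ : ℕ} (X : Set (Pt m)) (α : ℝ) (x : Fin k → Pt m)
    (y : Fin ℓ → Pt m) (n : Fin ℓ → ℝ) (S : Fin ℓ → Fin k) : Prop :=
  ∀ S' : Fin ℓ → Fin k, Ealpha X α x y n S ≤ Ealpha X α x y n S'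

/-- `ρ_α(σ,ε)`: equals `(σ/ε)^α − (σ/ε − 1)^α` for `σ > ε` (and for `σ = ε` when
`α ∈ (0,1)`), and equals `1` when `σ = ε` (covering also the convention for `α = 0`). -/
def rho (α σ ε : ℝ) : ℝ :=
  if σ = ε then 1 else (σ / ε) ^ α - (σ / ε - 1) ^ α


/-- `G` is the disjoint union of the subgraphs `Gi`: the `Gi` have pairwise
disjoint vertex sets, each is a subgraph of `G` (with matching weights), and
the edges of `G` are exactly the (disjoint) union of their edges. -/
def IsDisjointUnion {m k : ℕ} (G : WDG m) (Gi : Fin k → WDG m) : Prop :=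
  (∀ i i' : Fin k, i ≠ i' → Disjoint (Gi i).V (Gi i').V) ∧
  (∀ i, (Gi i).V ⊆ G.V) ∧
  (∀ i, (Gi i).E ⊆ G.E) ∧
  (∀ i, ∀ e ∈ (Gi i).E, (Gi i).w e = G.w e) ∧
  G.E = Finset.univ.biUnion (fun i => (Gi i).E)

/-- The projection coordinate `π(z) = ⟨z − p, v⟩` along the line through `p`
in direction `v`. -/
def proj {m : ℕ} (p v z : Pt m) : ℝ := ⟪z - p, v⟫

/-- The constant `C = √(m−1)/(2^{1−(m−1)(1−α)} − 1) + 1`. -/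
def Cconst (m : ℕ) (α : ℝ) : ℝ :=
  Real.sqrt ((m : ℝ) - 1) / ((2 : ℝ) ^ (1 - ((m : ℝ) - 1) * (1 - α)) - 1) + 1


section Stmt5Aux

open Finset

variable {m : ℕ}

/-- Monotonicity of acyclicity. -/
lemma acyclic_mono {V : Type*} {G H : SimpleGraph V} (h : H ≤ G) (hG : G.IsAcyclic) :
    H.IsAcyclic := fun _ c hc => hG (c.mapLe h) (hc.mapLe h)

lemma bMeas_nonneg {ℓ : ℕ} (y : Fin ℓ → Pt m) (n : Fin ℓ → ℝ) (hn : ∀ j, 0 < n j) (p : Pt m) :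
    0 ≤ bMeas y n p := by
  rw [bMeas, Finset.sum_apply']
  refine Finset.sum_nonneg fun j _ => ?_
  rw [Finsupp.single_apply]
  split <;> simp [le_of_lt (hn j)]

lemma massOf_add (u v : Pt m →₀ ℝ) : massOf (u + v) = massOf u + massOf v :=
  Finsupp.sum_add_index' (fun _ => rfl) (fun _ _ _ => rfl)

lemma massOf_single (p : Pt m) (t : ℝ) : massOf (Finsupp.single p t) = t := by
  classical
  rw [massOf, Finsupp.sum_single_index rfl]

/-- The shifted source measure `a + t δ_p − t δ_q`. -/
def shiftMeas (a : Pt m →₀ ℝ) (p q : Pt m) (t : ℝ) : Pt m →₀ ℝ :=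
  a + Finsupp.single p t + Finsupp.single q (-t)

lemma shiftMeas_apply (a : Pt m →₀ ℝ) (p q : Pt m) (t : ℝ) (z : Pt m) :
    shiftMeas a p q t z = a z + (if p = z then t else 0) + (if q = z then -t else 0) := by
  simp only [shiftMeas, Finsupp.add_apply, Finsupp.single_apply]

lemma shiftMeas_mass (a : Pt m →₀ ℝ) (p q : Pt m) (t : ℝ) :
    massOf (shiftMeas a p q t) = massOf a := by
  rw [shiftMeas, massOf_add, massOf_add, massOf_single, massOf_single]; ring

lemma shiftMeas_support (a : Pt m →₀ ℝ) (p q : Pt m) (t : ℝ) :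
    (shiftMeas a p q t).support ⊆ a.support ∪ {p} ∪ {q} := by
  refine (Finsupp.support_add).trans ?_
  refine Finset.union_subset_union ?_ (Finsupp.support_single_subset)
  refine (Finsupp.support_add).trans ?_
  exact Finset.union_subset_union le_rfl (Finsupp.support_single_subset)

lemma cost_zero_eq (G : WDG m) : WDG.cost 0 G = ∑ e ∈ G.E, dist e.1 e.2 := by
  simp [WDG.cost, Real.rpow_zero]

end Stmt5Aux
section Stmt5Aux2

open Finset

variable {m : ℕ}

/-- Modify the weights of `G` by `d`, keeping only edges with positive new weight. -/
def tweak (G : WDG m) (d : Pt m × Pt m → ℝ) : WDG m :=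
  ⟨G.V, G.E.filter (fun e => 0 < G.w e + d e), fun e => G.w e + d e⟩

lemma tweak_V (G : WDG m) (d : Pt m × Pt m → ℝ) : (tweak G d).V = G.V := rfl
lemma tweak_E (G : WDG m) (d : Pt m × Pt m → ℝ) :
    (tweak G d).E = G.E.filter (fun e => 0 < G.w e + d e) := rfl
lemma tweak_w (G : WDG m) (d : Pt m × Pt m → ℝ) (e : Pt m × Pt m) :
    (tweak G d).w e = G.w e + d e := rfl

lemma tweak_E_subset (G : WDG m) (d : Pt m × Pt m → ℝ) : (tweak G d).E ⊆ G.E :=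
  Finset.filter_subset _ _

lemma tweak_undirected_le (G : WDG m) (d : Pt m × Pt m → ℝ) :
    (tweak G d).undirected ≤ G.undirected := by
  intro u v huv
  rw [WDG.undirected, SimpleGraph.fromRel_adj] at huv ⊢
  exact ⟨huv.1, huv.2.imp (fun h => tweak_E_subset G d h) (fun h => tweak_E_subset G d h)⟩

lemma sum_tweak_filter (G : WDG m) (d : Pt m × Pt m → ℝ)
    (h0 : ∀ e ∈ G.E, 0 ≤ G.w e + d e) (Q : Pt m × Pt m → Prop) :
    ∑ e ∈ (tweak G d).E.filter (fun e => Q e), (G.w e + d e)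
      = ∑ e ∈ G.E.filter (fun e => Q e), (G.w e + d e) := by
  refine Finset.sum_subset ?_ ?_
  · intro e he
    rw [tweak_E, Finset.filter_filter] at he
    rw [Finset.mem_filter] at he ⊢
    exact ⟨he.1, he.2.2⟩
  · intro e he hne
    rw [Finset.mem_filter] at he
    rw [tweak_E, Finset.filter_filter, Finset.mem_filter] at hne
    have h1 := h0 e he.1
    by_contra hww
    exact hne ⟨he.1, lt_of_le_of_ne h1 (Ne.symm hww), he.2⟩

lemma tweak_outflow (G : WDG m) (d : Pt m × Pt m → ℝ)
    (h0 : ∀ e ∈ G.E, 0 ≤ G.w e + d e) (v : Pt m) :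
    (tweak G d).outflow v = G.outflow v + ∑ e ∈ G.E.filter (fun e => e.1 = v), d e := by
  rw [WDG.outflow, WDG.outflow]
  have := sum_tweak_filter G d h0 (fun e => e.1 = v)
  simp only [tweak_w]
  rw [← Finset.sum_add_distrib]
  convert this

lemma tweak_inflow (G : WDG m) (d : Pt m × Pt m → ℝ)
    (h0 : ∀ e ∈ G.E, 0 ≤ G.w e + d e) (v : Pt m) :
    (tweak G d).inflow v = G.inflow v + ∑ e ∈ G.E.filter (fun e => e.2 = v), d e := by
  rw [WDG.inflow, WDG.inflow]
  have := sum_tweak_filter G d h0 (fun e => e.2 = v)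
  simp only [tweak_w]
  rw [← Finset.sum_add_distrib]
  convert this

lemma tweak_isTP {X : Set (Pt m)} {G : WDG m} {a b a' : Pt m →₀ ℝ} {d : Pt m × Pt m → ℝ}
    (hTP : IsTransportPath X G a b)
    (h0 : ∀ e ∈ G.E, 0 ≤ G.w e + d e)
    (hbal : ∀ v, (∑ e ∈ G.E.filter (fun e => e.1 = v), d e)
        - (∑ e ∈ G.E.filter (fun e => e.2 = v), d e) = a' v - a v)
    (ha' : ∀ z ∈ a'.support, z ∈ G.V) :
    IsTransportPath X (tweak G d) a' b := by
  obtain ⟨hEOK, hVX, haV, hbV, hacyc, hbalG⟩ := hTP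
  refine ⟨?_, hVX, ha', hbV, acyclic_mono (tweak_undirected_le G d) hacyc, ?_⟩
  · intro e he
    rw [tweak_E, Finset.mem_filter] at he
    obtain ⟨h1, h2, h3, _⟩ := hEOK e he.1
    exact ⟨h1, h2, h3, he.2⟩
  · intro v
    rw [tweak_outflow G d h0 v, tweak_inflow G d h0 v]
    have := hbalG v
    have h2 := hbal v
    linarith

lemma tweak_cost_of_ne_zero {α : ℝ} (hα : α ≠ 0) (G : WDG m) (d : Pt m × Pt m → ℝ)
    (h0 : ∀ e ∈ G.E, 0 ≤ G.w e + d e) :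
    WDG.cost α (tweak G d) = ∑ e ∈ G.E, (G.w e + d e) ^ α * dist e.1 e.2 := by
  rw [WDG.cost]
  simp only [tweak_w]
  refine Finset.sum_subset (tweak_E_subset G d) ?_
  intro e he hne
  rw [tweak_E, Finset.mem_filter] at hne
  have : G.w e + d e = 0 := le_antisymm (by by_contra h; exact hne ⟨he, lt_of_not_ge h⟩) (h0 e he)
  rw [this, Real.zero_rpow hα, zero_mul]

end Stmt5Aux2
section Stmt5Aux3

open Finset

variable {m k ℓ : ℕ} {X : Set (Pt m)} {α : ℝ} {x : Fin k → Pt m}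
  {y : Fin ℓ → Pt m} {n : Fin ℓ → ℝ} {G : WDG m} {a : Pt m →₀ ℝ}

lemma anti_aux (hα0 : 0 ≤ α)
    (ha0 : ∀ z, 0 ≤ a z) (haR : ↑a.support ⊆ Set.range x) (haM : massOf a = 1)
    (hTP : IsTransportPath X G a (bMeas y n))
    (hOpt : ∀ G', IsAllocPath X x y n G' → WDG.cost α G ≤ WDG.cost α G')
    {e : Pt m × Pt m} (he : e ∈ G.E) (hse : Prod.swap e ∈ G.E)
    (hle : G.w (Prod.swap e) ≤ G.w e) : False := by
  classical
  set es := Prod.swap e with hes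
  set w1 := G.w e with hw1
  set w2 := G.w es with hw2
  obtain ⟨_, _, hne12, hw1pos⟩ := hTP.1 e he
  obtain ⟨_, _, hne21, hw2pos⟩ := hTP.1 es hse
  have hnee : es ≠ e := by
    intro h
    apply hne12
    have : e.2 = e.1 := congrArg Prod.fst h
    exact this.symm
  set d : Pt m × Pt m → ℝ := fun e' => if e' = e ∨ e' = es then -w2 else 0 with hd
  have hnee' : e ≠ es := fun h => hnee h.symm
  have hde' : d e = -w2 := if_pos (Or.inl rfl)
  have hdes : d es = -w2 := if_pos (Or.inr rfl)
  have hdsplit : ∀ e', d e' = (if e' = e then -w2 else 0) + (if e' = es then -w2 else 0) := by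
    intro e'
    show (if e' = e ∨ e' = es then -w2 else 0) = _
    by_cases h1 : e' = e
    · subst h1
      rw [if_pos (Or.inl rfl), if_pos rfl, if_neg hnee']
      ring
    · by_cases h2 : e' = es
      · subst h2
        rw [if_pos (Or.inr rfl), if_neg h1, if_pos rfl]
        ring
      · rw [if_neg ?_, if_neg h1, if_neg h2]
        · ring
        · rintro (h | h)
          · exact h1 h
          · exact h2 h
  have h0 : ∀ e' ∈ G.E, 0 ≤ G.w e' + d e' := by
    intro e' he'
    by_cases h1 : e' = e
    · subst h1; rw [hde']; linarith
    · by_cases h2 : e' = es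
      · subst h2; rw [hdes]; linarith
      · have : d e' = 0 := by simp [hd, h1, h2]
        rw [this, add_zero]
        exact (hTP.1 e' he').2.2.2.le
  have hsum : ∀ s : Finset (Pt m × Pt m), ∑ e' ∈ s, d e'
      = (if e ∈ s then -w2 else 0) + (if es ∈ s then -w2 else 0) := by
    intro s
    rw [Finset.sum_congr rfl (fun e' _ => hdsplit e'), Finset.sum_add_distrib,
      Finset.sum_ite_eq' s e (fun _ => -w2), Finset.sum_ite_eq' s es (fun _ => -w2)]
  have hbal : ∀ v, (∑ e' ∈ G.E.filter (fun e' => e'.1 = v), d e')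
      - (∑ e' ∈ G.E.filter (fun e' => e'.2 = v), d e') = a v - a v := by
    intro v
    rw [hsum, hsum, sub_self]
    have m1 : (e ∈ G.E.filter fun e' => e'.1 = v) = (e.1 = v) := by
      simp [Finset.mem_filter, he]
    have m2 : (es ∈ G.E.filter fun e' => e'.1 = v) = (e.2 = v) := by
      simp [Finset.mem_filter, hes, show e.swap ∈ G.E from hse]
    have m3 : (e ∈ G.E.filter fun e' => e'.2 = v) = (e.2 = v) := by
      simp [Finset.mem_filter, he]
    have m4 : (es ∈ G.E.filter fun e' => e'.2 = v) = (e.1 = v) := by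
      simp [Finset.mem_filter, hes, show e.swap ∈ G.E from hse]
    simp only [m1, m2, m3, m4]
    ring
  have hTP' := tweak_isTP hTP h0 hbal hTP.2.2.1
  have hAlloc : IsAllocPath X x y n (tweak G d) := ⟨a, ha0, haR, haM, hTP'⟩
  have hco := hOpt _ hAlloc
  have hdes0 : G.w es + d es = 0 := by rw [hdes]; ring
  have hdistpos : 0 < dist es.1 es.2 := dist_pos.mpr hne21
  have hdists : dist es.1 es.2 = dist e.1 e.2 := by
    rw [hes, Prod.fst_swap, Prod.snd_swap, dist_comm]
  rcases hα0.eq_or_lt with hz | hαpos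
  · -- α = 0
    rw [← hz] at hco
    rw [cost_zero_eq, cost_zero_eq] at hco
    have hsub : (tweak G d).E ⊆ G.E.erase es := by
      intro e' he'
      rw [tweak_E, Finset.mem_filter] at he'
      rw [Finset.mem_erase]
      refine ⟨?_, he'.1⟩
      intro h; subst h
      rw [hdes0] at he'
      exact lt_irrefl 0 he'.2
    have h1 : ∑ e' ∈ (tweak G d).E, dist e'.1 e'.2 ≤ ∑ e' ∈ G.E.erase es, dist e'.1 e'.2 :=
      Finset.sum_le_sum_of_subset_of_nonneg hsub (fun _ _ _ => dist_nonneg)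
    have h2 : ∑ e' ∈ G.E.erase es, dist e'.1 e'.2 + dist es.1 es.2 = ∑ e' ∈ G.E, dist e'.1 e'.2 :=
      Finset.sum_erase_add _ _ hse
    linarith
  · -- α > 0
    have hαne : α ≠ 0 := ne_of_gt hαpos
    have hcost' := tweak_cost_of_ne_zero hαne G d h0
    have hmem2 : es ∈ G.E.erase e := Finset.mem_erase.mpr ⟨hnee, hse⟩
    have split : ∀ f : Pt m × Pt m → ℝ, ∑ e' ∈ G.E, f e'
        = ∑ e' ∈ (G.E.erase e).erase es, f e' + f es + f e := by
      intro f
      rw [← Finset.sum_erase_add G.E f he, ← Finset.sum_erase_add (G.E.erase e) f hmem2]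
    rw [split] at hcost'
    have hrest : ∑ e' ∈ (G.E.erase e).erase es, (G.w e' + d e') ^ α * dist e'.1 e'.2
        = ∑ e' ∈ (G.E.erase e).erase es, (G.w e') ^ α * dist e'.1 e'.2 := by
      refine Finset.sum_congr rfl ?_
      intro e' he'
      rw [Finset.mem_erase, Finset.mem_erase] at he'
      have : d e' = 0 := by simp [hd, he'.1, he'.2.1]
      rw [this, add_zero]
    have hcostG : WDG.cost α G = ∑ e' ∈ (G.E.erase e).erase es, (G.w e') ^ α * dist e'.1 e'.2
        + w2 ^ α * dist es.1 es.2 + w1 ^ α * dist e.1 e.2 := split _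
    rw [hrest, hdes0, Real.zero_rpow hαne, zero_mul, add_zero, hde'] at hcost'
    have hmono : (w1 + -w2) ^ α ≤ w1 ^ α :=
      Real.rpow_le_rpow (by linarith) (by linarith) hα0
    have hpos2 : 0 < w2 ^ α := Real.rpow_pos_of_pos hw2pos α
    have hd2 : 0 < w2 ^ α * dist es.1 es.2 := mul_pos hpos2 hdistpos
    have hdistpos' : 0 < dist e.1 e.2 := dist_pos.mpr hne12
    nlinarith [hco, hcost', hcostG, mul_le_mul_of_nonneg_right hmono hdistpos'.le]

lemma no_antiparallel (hα0 : 0 ≤ α)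
    (ha0 : ∀ z, 0 ≤ a z) (haR : ↑a.support ⊆ Set.range x) (haM : massOf a = 1)
    (hTP : IsTransportPath X G a (bMeas y n))
    (hOpt : ∀ G', IsAllocPath X x y n G' → WDG.cost α G ≤ WDG.cost α G') :
    ∀ e ∈ G.E, Prod.swap e ∉ G.E := by
  intro e he hse
  rcases le_total (G.w (Prod.swap e)) (G.w e) with h | h
  · exact anti_aux hα0 ha0 haR haM hTP hOpt he hse h
  · refine anti_aux hα0 ha0 haR haM hTP hOpt hse ?_ ?_
    · rw [Prod.swap_swap]; exact he
    · rw [Prod.swap_swap]; exact h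

end Stmt5Aux3
section Stmt5Aux4

open Finset

variable {m : ℕ}

/-- The undirected graph of `G` with the (undirected) edge `e` deleted. -/
def delGraph (G : WDG m) (e : Pt m × Pt m) : SimpleGraph (Pt m) :=
  SimpleGraph.fromRel (fun p q => (p, q) ∈ G.E.erase e)

lemma delGraph_le (G : WDG m) (e : Pt m × Pt m) : delGraph G e ≤ G.undirected := by
  intro p q h
  rw [delGraph, SimpleGraph.fromRel_adj] at h
  rw [WDG.undirected, SimpleGraph.fromRel_adj]
  exact ⟨h.1, h.2.imp (fun hh => Finset.erase_subset _ _ hh)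
    (fun hh => Finset.erase_subset _ _ hh)⟩

lemma cut_lemma {X : Set (Pt m)} {G : WDG m} {a b : Pt m →₀ ℝ}
    (hTP : IsTransportPath X G a b)
    (hC : ∀ e' ∈ G.E, Prod.swap e' ∉ G.E)
    {e : Pt m × Pt m} (he : e ∈ G.E) :
    ¬ (delGraph G e).Reachable e.1 e.2 ∧
      ∑ p ∈ G.V.filter (fun p => (delGraph G e).Reachable e.1 p), (a p - b p) = G.w e := by
  classical
  obtain ⟨hEOK, hVX, haV, hbV, hacyc, hbal⟩ := hTP
  obtain ⟨h1V, h2V, hne, hwpos⟩ := hEOK e he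
  have hadj : G.undirected.Adj e.1 e.2 := by
    rw [WDG.undirected, SimpleGraph.fromRel_adj]
    refine ⟨hne, Or.inl ?_⟩
    rw [Prod.mk.eta]; exact he
  have hbridge := (SimpleGraph.isAcyclic_iff_forall_adj_isBridge.mp hacyc) hadj
  rw [SimpleGraph.isBridge_iff] at hbridge
  have hle2 : delGraph G e ≤ G.undirected \ SimpleGraph.fromEdgeSet {s(e.1, e.2)} := by
    intro p q hpq
    have hGadj : G.undirected.Adj p q := delGraph_le G e hpq
    rw [delGraph, SimpleGraph.fromRel_adj] at hpq
    obtain ⟨hpq1, hpq2⟩ := hpq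
    rw [SimpleGraph.sdiff_adj]
    refine ⟨hGadj, ?_⟩
    rw [SimpleGraph.fromEdgeSet_adj]
    rintro ⟨hmem, -⟩
    rw [Set.mem_singleton_iff, Sym2.eq_iff] at hmem
    rcases hmem with ⟨hp, hq⟩ | ⟨hp, hq⟩
    · subst hp; subst hq
      rcases hpq2 with h | h
      · exact (Finset.mem_erase.mp h).1 Prod.mk.eta
      · refine hC e he ?_
        have hqp : Prod.swap e = (e.2, e.1) := rfl
        rw [hqp]
        exact Finset.erase_subset _ _ h
    · subst hp; subst hq
      rcases hpq2 with h | h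
      · refine hC e he ?_
        have hqp : Prod.swap e = (e.2, e.1) := rfl
        rw [hqp]
        exact Finset.erase_subset _ _ h
      · exact (Finset.mem_erase.mp h).1 Prod.mk.eta
  have hnreach : ¬ (delGraph G e).Reachable e.1 e.2 := fun h => hbridge (h.mono hle2)
  refine ⟨hnreach, ?_⟩
  set R : Pt m → Prop := fun p => (delGraph G e).Reachable e.1 p with hR
  set F := G.V.filter R with hF
  have hcross : ∀ e' ∈ G.E, e' ≠ e → (R e'.1 ↔ R e'.2) := by
    intro e' he' hne'
    have hadj' : (delGraph G e).Adj e'.1 e'.2 := by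
      rw [delGraph, SimpleGraph.fromRel_adj]
      refine ⟨(hEOK e' he').2.2.1, Or.inl ?_⟩
      rw [Finset.mem_erase, Prod.mk.eta]
      exact ⟨hne', he'⟩
    exact ⟨fun h => h.trans hadj'.reachable, fun h => h.trans hadj'.symm.reachable⟩
  have hRe1 : R e.1 := SimpleGraph.Reachable.refl _
  have hflow : ∀ p ∈ F, a p - b p = (∑ e' ∈ G.E, if e'.1 = p then G.w e' else 0)
      - (∑ e' ∈ G.E, if e'.2 = p then G.w e' else 0) := by
    intro p _
    rw [← Finset.sum_filter, ← Finset.sum_filter]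
    exact (hbal p).symm
  rw [Finset.sum_congr rfl hflow, Finset.sum_sub_distrib]
  have h1 : ∀ (pr : Pt m × Pt m → Pt m),
      ∑ p ∈ F, ∑ e' ∈ G.E, (if pr e' = p then G.w e' else 0)
        = ∑ e' ∈ G.E, (if pr e' ∈ F then G.w e' else 0) := by
    intro pr
    rw [Finset.sum_comm]
    exact Finset.sum_congr rfl (fun e' _ => Finset.sum_ite_eq F (pr e') (fun _ => G.w e'))
  rw [h1 (fun e' => e'.1), h1 (fun e' => e'.2), ← Finset.sum_sub_distrib]
  rw [Finset.sum_eq_single e]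
  · have hm1 : e.1 ∈ F := by
      rw [hF, Finset.mem_filter]; exact ⟨h1V, hRe1⟩
    have hm2 : e.2 ∉ F := by
      rw [hF, Finset.mem_filter]
      rintro ⟨-, hr⟩
      exact hnreach hr
    rw [if_pos hm1, if_neg hm2]
    ring
  · intro e' he' hne'
    have hv1 := (hEOK e' he').1
    have hv2 := (hEOK e' he').2.1
    have hiff := hcross e' he' hne'
    by_cases hh : e'.1 ∈ F
    · have : e'.2 ∈ F := by
        rw [hF, Finset.mem_filter] at hh ⊢
        exact ⟨hv2, hiff.mp hh.2⟩
      rw [if_pos hh, if_pos this]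
      ring
    · have : e'.2 ∉ F := by
        rw [hF, Finset.mem_filter] at hh ⊢
        rintro ⟨-, hr⟩
        exact hh ⟨hv1, hiff.mpr hr⟩
      rw [if_neg hh, if_neg this]
      ring
  · intro h
    exact absurd he h

lemma cut_supply {X : Set (Pt m)} {G : WDG m} {a b : Pt m →₀ ℝ}
    (hTP : IsTransportPath X G a b)
    (hb : ∀ p, 0 ≤ b p)
    (hC : ∀ e' ∈ G.E, Prod.swap e' ∉ G.E)
    {e : Pt m × Pt m} (he : e ∈ G.E) :
    ∃ p, (delGraph G e).Reachable e.1 p ∧ 0 < a p := by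
  classical
  have hcut := (cut_lemma hTP hC he).2
  have hwpos := (hTP.1 e he).2.2.2
  by_contra hcon
  push_neg at hcon
  have hle : ∑ p ∈ G.V.filter (fun p => (delGraph G e).Reachable e.1 p), (a p - b p) ≤ 0 := by
    refine Finset.sum_nonpos ?_
    intro p hp
    rw [Finset.mem_filter] at hp
    have h1 := hcon p hp.2
    have h2 := hb p
    linarith
  linarith

end Stmt5Aux4
section Stmt5Aux5

open Finset

lemma walk_getVert_injOn {V : Type*} {G : SimpleGraph V} :
    ∀ {u v : V} (p : G.Walk u v), p.IsPath →
      ∀ j, j ≤ p.length → ∀ kk, kk ≤ p.length → p.getVert j = p.getVert kk → j = kk := by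
  intro u v p
  induction p with
  | nil =>
    intro _ j hj kk hk _
    simp only [SimpleGraph.Walk.length_nil, Nat.le_zero] at hj hk
    omega
  | @cons a c d h q ih =>
    intro hp j hj kk hk heq
    rw [SimpleGraph.Walk.cons_isPath_iff] at hp
    rw [SimpleGraph.Walk.length_cons] at hj hk
    match j, kk with
    | 0, 0 => rfl
    | 0, kk+1 =>
      exfalso
      rw [SimpleGraph.Walk.getVert_zero, SimpleGraph.Walk.getVert_cons_succ] at heq
      exact hp.2 (SimpleGraph.Walk.mem_support_iff_exists_getVert.mpr
        ⟨kk, heq.symm, by omega⟩)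
    | j+1, 0 =>
      exfalso
      rw [SimpleGraph.Walk.getVert_zero, SimpleGraph.Walk.getVert_cons_succ] at heq
      exact hp.2 (SimpleGraph.Walk.mem_support_iff_exists_getVert.mpr
        ⟨j, heq, by omega⟩)
    | j+1, kk+1 =>
      rw [SimpleGraph.Walk.getVert_cons_succ, SimpleGraph.Walk.getVert_cons_succ] at heq
      have := ih hp.1 j (by omega) kk (by omega) heq
      omega

lemma path_data {m : ℕ} {G : WDG m} {p q : Pt m}
    (h : G.undirected.Reachable p q) (hne : p ≠ q) :
    ∃ (r : ℕ) (v : ℕ → Pt m), 1 ≤ r ∧ v 0 = p ∧ v r = q ∧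
      (∀ j, j < r → G.undirected.Adj (v j) (v (j+1))) ∧
      (∀ j, j ≤ r → ∀ kk, kk ≤ r → v j = v kk → j = kk) := by
  obtain ⟨w⟩ := h
  set P := w.toPath with hP
  refine ⟨(P : G.undirected.Walk p q).length, fun j => (P : G.undirected.Walk p q).getVert j,
    ?_, SimpleGraph.Walk.getVert_zero _, SimpleGraph.Walk.getVert_length _, ?_, ?_⟩
  · by_contra hr
    push_neg at hr
    have h0 : (P : G.undirected.Walk p q).length = 0 := by omega
    exact hne (SimpleGraph.Walk.eq_of_length_eq_zero h0)
  · intro j hj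
    exact SimpleGraph.Walk.adj_getVert_succ _ hj
  · exact walk_getVert_injOn _ P.2

lemma reach_of_steps {V : Type*} {H : SimpleGraph V} (v : ℕ → V) (c : ℕ) :
    ∀ d, c ≤ d → (∀ j, c ≤ j → j < d → H.Adj (v j) (v (j+1))) → H.Reachable (v c) (v d) := by
  intro d
  induction d with
  | zero =>
    intro hcd _
    have : c = 0 := by omega
    subst this
    exact SimpleGraph.Reachable.refl _
  | succ d ih =>
    intro hcd hstep
    by_cases hc : c = d + 1
    · subst hc; exact SimpleGraph.Reachable.refl _
    · have h1 : c ≤ d := by omega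
      exact (ih h1 (fun j ha hb => hstep j ha (by omega))).trans
        (hstep d h1 (by omega)).reachable

variable {m : ℕ}

/-- The directed edge of `G` realizing the `j`-th step of the path `v`. -/
def eEdge (G : WDG m) (v : ℕ → Pt m) (j : ℕ) : Pt m × Pt m :=
  if (v j, v (j+1)) ∈ G.E then (v j, v (j+1)) else (v (j+1), v j)

/-- The sign of the `j`-th step: `+1` if the edge is directed along the path. -/
def sgnP (G : WDG m) (v : ℕ → Pt m) (j : ℕ) : ℝ :=
  if (v j, v (j+1)) ∈ G.E then 1 else -1

/-- The weight modification pushing `t` units of flow along the path. -/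
def pd (G : WDG m) (v : ℕ → Pt m) (r : ℕ) (t : ℝ) (e : Pt m × Pt m) : ℝ :=
  t * ∑ j ∈ Finset.range r, (if e = eEdge G v j then sgnP G v j else 0)

section PathFacts

variable {G : WDG m} {v : ℕ → Pt m} {r : ℕ}

lemma eEdge_cases (hadj : ∀ j, j < r → (v j, v (j+1)) ∈ G.E ∨ (v (j+1), v j) ∈ G.E)
    (j : ℕ) (hj : j < r) :
    (eEdge G v j = (v j, v (j+1)) ∧ sgnP G v j = 1 ∧ (v j, v (j+1)) ∈ G.E) ∨
    (eEdge G v j = (v (j+1), v j) ∧ sgnP G v j = -1 ∧ (v (j+1), v j) ∈ G.E) := by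
  by_cases h : (v j, v (j+1)) ∈ G.E
  · exact Or.inl ⟨if_pos h, if_pos h, h⟩
  · rcases hadj j hj with h' | h'
    · exact absurd h' h
    · exact Or.inr ⟨if_neg h, if_neg h, h'⟩

lemma eEdge_mem (hadj : ∀ j, j < r → (v j, v (j+1)) ∈ G.E ∨ (v (j+1), v j) ∈ G.E)
    (j : ℕ) (hj : j < r) : eEdge G v j ∈ G.E := by
  rcases eEdge_cases hadj j hj with ⟨he, -, hm⟩ | ⟨he, -, hm⟩ <;> rw [he] <;> exact hm

lemma eEdge_inj (hadj : ∀ j, j < r → (v j, v (j+1)) ∈ G.E ∨ (v (j+1), v j) ∈ G.E)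
    (hinj : ∀ j, j ≤ r → ∀ kk, kk ≤ r → v j = v kk → j = kk)
    {j kk : ℕ} (hj : j < r) (hk : kk < r) (he : eEdge G v j = eEdge G v kk) : j = kk := by
  rcases eEdge_cases hadj j hj with ⟨h1, -, -⟩ | ⟨h1, -, -⟩ <;>
    rcases eEdge_cases hadj kk hk with ⟨h2, -, -⟩ | ⟨h2, -, -⟩ <;>
    rw [h1, h2, Prod.mk.injEq] at he
  · exact hinj j (by omega) kk (by omega) he.1
  · have e1 := hinj j (by omega) (kk+1) (by omega) he.1
    have e2 := hinj (j+1) (by omega) kk (by omega) he.2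
    omega
  · have e1 := hinj (j+1) (by omega) kk (by omega) he.1
    have e2 := hinj j (by omega) (kk+1) (by omega) he.2
    omega
  · have e1 := hinj (j+1) (by omega) (kk+1) (by omega) he.1
    omega

lemma pd_apply (hadj : ∀ j, j < r → (v j, v (j+1)) ∈ G.E ∨ (v (j+1), v j) ∈ G.E)
    (hinj : ∀ j, j ≤ r → ∀ kk, kk ≤ r → v j = v kk → j = kk)
    (t : ℝ) {j : ℕ} (hj : j < r) :
    pd G v r t (eEdge G v j) = t * sgnP G v j := by
  rw [pd]
  congr 1
  rw [Finset.sum_eq_single j]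
  · rw [if_pos rfl]
  · intro j' hj' hne'
    rw [Finset.mem_range] at hj'
    rw [if_neg]
    intro h
    exact hne' (eEdge_inj hadj hinj hj hj' h).symm
  · intro h
    exact absurd (Finset.mem_range.mpr hj) h

lemma pd_eq_zero {t : ℝ} {e : Pt m × Pt m} (he : ∀ j, j < r → e ≠ eEdge G v j) :
    pd G v r t e = 0 := by
  rw [pd]
  rw [Finset.sum_eq_zero]
  · ring
  · intro j hj
    rw [Finset.mem_range] at hj
    rw [if_neg (he j hj)]

lemma pd_sum (t : ℝ) (s : Finset (Pt m × Pt m)) :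
    ∑ e ∈ s, pd G v r t e
      = t * ∑ j ∈ Finset.range r, (if eEdge G v j ∈ s then sgnP G v j else 0) := by
  simp only [pd]
  rw [← Finset.mul_sum]
  congr 1
  rw [Finset.sum_comm]
  exact Finset.sum_congr rfl fun j _ =>
    Finset.sum_ite_eq' s (eEdge G v j) (fun _ => sgnP G v j)

lemma pd_balance (hadj : ∀ j, j < r → (v j, v (j+1)) ∈ G.E ∨ (v (j+1), v j) ∈ G.E)
    (t : ℝ) (p : Pt m) :
    (∑ e ∈ G.E.filter (fun e => e.1 = p), pd G v r t e)
      - (∑ e ∈ G.E.filter (fun e => e.2 = p), pd G v r t e)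
    = t * ((if v 0 = p then (1:ℝ) else 0) - (if v r = p then (1:ℝ) else 0)) := by
  rw [pd_sum, pd_sum, ← mul_sub, ← Finset.sum_sub_distrib]
  congr 1
  rw [← Finset.sum_range_sub' (fun j => if v j = p then (1:ℝ) else 0) r]
  refine Finset.sum_congr rfl ?_
  intro j hjr
  rw [Finset.mem_range] at hjr
  rcases eEdge_cases hadj j hjr with ⟨he, hsgn, hmem⟩ | ⟨he, hsgn, hmem⟩
  · rw [he, hsgn]
    have m1 : ((v j, v (j+1)) ∈ G.E.filter (fun e => e.1 = p)) = (v j = p) := by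
      simp [Finset.mem_filter, hmem]
    have m2 : ((v j, v (j+1)) ∈ G.E.filter (fun e => e.2 = p)) = (v (j+1) = p) := by
      simp [Finset.mem_filter, hmem]
    simp only [m1, m2]
  · rw [he, hsgn]
    have m1 : ((v (j+1), v j) ∈ G.E.filter (fun e => e.1 = p)) = (v (j+1) = p) := by
      simp [Finset.mem_filter, hmem]
    have m2 : ((v (j+1), v j) ∈ G.E.filter (fun e => e.2 = p)) = (v j = p) := by
      simp [Finset.mem_filter, hmem]
    simp only [m1, m2]
    split_ifs <;> ring

end PathFacts

end Stmt5Aux5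
section Stmt5Aux6

open Finset

variable {m : ℕ}

lemma tweak_cost_zero_le {G : WDG m} {d : Pt m × Pt m → ℝ} {e0 : Pt m × Pt m}
    (he0 : e0 ∈ G.E) (hz : G.w e0 + d e0 ≤ 0) :
    WDG.cost 0 (tweak G d) ≤ WDG.cost 0 G - dist e0.1 e0.2 := by
  rw [cost_zero_eq, cost_zero_eq]
  have hsub : (tweak G d).E ⊆ G.E.erase e0 := by
    intro e' he'
    rw [tweak_E, Finset.mem_filter] at he'
    rw [Finset.mem_erase]
    refine ⟨?_, he'.1⟩
    intro h; subst h
    exact absurd he'.2 (not_lt.mpr hz)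
  have h1 : ∑ e' ∈ (tweak G d).E, dist e'.1 e'.2 ≤ ∑ e' ∈ G.E.erase e0, dist e'.1 e'.2 :=
    Finset.sum_le_sum_of_subset_of_nonneg hsub (fun _ _ _ => dist_nonneg)
  have h2 : ∑ e' ∈ G.E.erase e0, dist e'.1 e'.2 + dist e0.1 e0.2 = ∑ e' ∈ G.E, dist e'.1 e'.2 :=
    Finset.sum_erase_add _ _ he0
  linarith

lemma tweak_undirected_eq {G : WDG m} {d : Pt m × Pt m → ℝ}
    (h : ∀ e ∈ G.E, 0 < G.w e + d e) : (tweak G d).undirected = G.undirected := by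
  have hE : (tweak G d).E = G.E := by
    rw [tweak_E]
    exact Finset.filter_eq_self.mpr h
  rw [WDG.undirected, WDG.undirected, hE]

lemma concave_pair {α w ε : ℝ} (hα0 : 0 < α) (hα1 : α < 1) (hε : 0 < ε) (hεw : ε < w) :
    (w + ε) ^ α + (w - ε) ^ α < 2 * w ^ α := by
  have h := (Real.strictConcaveOn_rpow hα0 hα1).2
    (Set.mem_Ici.mpr (by linarith : (0:ℝ) ≤ w - ε))
    (Set.mem_Ici.mpr (by linarith : (0:ℝ) ≤ w + ε))
    (by intro hh; nlinarith)
    (by norm_num : (0:ℝ) < 1/2) (by norm_num : (0:ℝ) < 1/2) (by norm_num)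
  simp only [smul_eq_mul] at h
  have key : (1/2 : ℝ) * (w - ε) + (1/2) * (w + ε) = w := by ring
  rw [key] at h
  linarith

section Perturb

variable {k ℓ : ℕ} {X : Set (Pt m)} {x : Fin k → Pt m} {y : Fin ℓ → Pt m}
  {n : Fin ℓ → ℝ} {G : WDG m} {a : Pt m →₀ ℝ} {r : ℕ} {v : ℕ → Pt m}

lemma eEdge_dist (hadj : ∀ j, j < r → (v j, v (j+1)) ∈ G.E ∨ (v (j+1), v j) ∈ G.E)
    {j : ℕ} (hj : j < r) :
    dist (eEdge G v j).1 (eEdge G v j).2 = dist (v j) (v (j+1)) := by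
  rcases eEdge_cases hadj j hj with ⟨he, -, -⟩ | ⟨he, -, -⟩ <;> rw [he]
  rw [dist_comm]

lemma path_ends_V (hEOK : G.edgesOK)
    (hadj : ∀ j, j < r → (v j, v (j+1)) ∈ G.E ∨ (v (j+1), v j) ∈ G.E)
    (hr : 1 ≤ r) : v 0 ∈ G.V ∧ v r ∈ G.V := by
  constructor
  · rcases hadj 0 hr with h | h
    · exact (hEOK _ h).1
    · exact (hEOK _ h).2.1
  · have hj : r - 1 < r := by omega
    have hsucc : r - 1 + 1 = r := by omega
    rcases hadj (r-1) hj with h | h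
    · rw [hsucc] at h
      exact (hEOK _ h).2.1
    · rw [hsucc] at h
      exact (hEOK _ h).1

lemma perturb_alloc
    (ha0 : ∀ z, 0 ≤ a z) (haR : ↑a.support ⊆ Set.range x) (haM : massOf a = 1)
    (hTP : IsTransportPath X G a (bMeas y n))
    (hadj : ∀ j, j < r → (v j, v (j+1)) ∈ G.E ∨ (v (j+1), v j) ∈ G.E)
    (hinj : ∀ j, j ≤ r → ∀ kk, kk ≤ r → v j = v kk → j = kk)
    (hr : 1 ≤ r)
    (h0R : v 0 ∈ Set.range x) (hrR : v r ∈ Set.range x)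
    {t : ℝ}
    (h0 : ∀ e ∈ G.E, 0 ≤ G.w e + pd G v r t e)
    (hp0 : 0 ≤ a (v 0) + t) (hpr : 0 ≤ a (v r) - t) :
    (∀ z, 0 ≤ shiftMeas a (v 0) (v r) t z) ∧
      ↑(shiftMeas a (v 0) (v r) t).support ⊆ Set.range x ∧
      massOf (shiftMeas a (v 0) (v r) t) = 1 ∧
      IsTransportPath X (tweak G (pd G v r t)) (shiftMeas a (v 0) (v r) t) (bMeas y n) := by
  have hne0r : v 0 ≠ v r := by
    intro h
    have := hinj 0 (by omega) r (by omega) h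
    omega
  set a' := shiftMeas a (v 0) (v r) t with ha'
  have ha'z : ∀ z, 0 ≤ a' z := by
    intro z
    rw [ha', shiftMeas_apply]
    by_cases h1 : v 0 = z
    · rw [if_pos h1, if_neg (by rw [← h1]; exact fun hh => hne0r hh.symm)]
      rw [← h1]
      linarith
    · rw [if_neg h1]
      by_cases h2 : v r = z
      · rw [if_pos h2, ← h2]
        linarith
      · rw [if_neg h2]
        have := ha0 z
        linarith
  have ha'supp : ∀ z ∈ a'.support, z ∈ G.V := by
    intro z hz
    have hsub := shiftMeas_support a (v 0) (v r) t hz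
    rw [Finset.mem_union, Finset.mem_union] at hsub
    have hV := path_ends_V hTP.1 hadj hr
    rcases hsub with (hh | hh) | hh
    · exact hTP.2.2.1 z hh
    · rw [Finset.mem_singleton] at hh
      rw [hh]; exact hV.1
    · rw [Finset.mem_singleton] at hh
      rw [hh]; exact hV.2
  have hbalance : ∀ p, (∑ e ∈ G.E.filter (fun e => e.1 = p), pd G v r t e)
      - (∑ e ∈ G.E.filter (fun e => e.2 = p), pd G v r t e) = a' p - a p := by
    intro p
    rw [pd_balance hadj t p, ha', shiftMeas_apply]
    split_ifs <;> ring
  have hTP' := tweak_isTP hTP h0 hbalance ha'supp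
  refine ⟨ha'z, ?_, ?_, hTP'⟩
  · intro z hz
    rw [Finset.mem_coe] at hz
    have hsub := shiftMeas_support a (v 0) (v r) t hz
    rw [Finset.mem_union, Finset.mem_union] at hsub
    rcases hsub with (hh | hh) | hh
    · exact haR hh
    · rw [Finset.mem_singleton] at hh
      rw [hh]; exact h0R
    · rw [Finset.mem_singleton] at hh
      rw [hh]; exact hrR
  · rw [ha', shiftMeas_mass, haM]

lemma cost_split (α : ℝ)
    (hadj : ∀ j, j < r → (v j, v (j+1)) ∈ G.E ∨ (v (j+1), v j) ∈ G.E)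
    (hinj : ∀ j, j ≤ r → ∀ kk, kk ≤ r → v j = v kk → j = kk) :
    WDG.cost α G = ∑ e ∈ G.E \ (Finset.range r).image (eEdge G v), (G.w e) ^ α * dist e.1 e.2
      + ∑ j ∈ Finset.range r, (G.w (eEdge G v j)) ^ α * dist (v j) (v (j+1)) := by
  have him : (Finset.range r).image (eEdge G v) ⊆ G.E := by
    intro e he
    rw [Finset.mem_image] at he
    obtain ⟨j, hj, rfl⟩ := he
    exact eEdge_mem hadj j (Finset.mem_range.mp hj)
  rw [WDG.cost, ← Finset.sum_sdiff him]
  congr 1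
  rw [Finset.sum_image (fun j hj j' hj' h =>
    eEdge_inj hadj hinj (Finset.mem_range.mp hj) (Finset.mem_range.mp hj') h)]
  refine Finset.sum_congr rfl ?_
  intro j hj
  rw [eEdge_dist hadj (Finset.mem_range.mp hj)]

lemma perturb_cost {α : ℝ} (hα : α ≠ 0)
    (hadj : ∀ j, j < r → (v j, v (j+1)) ∈ G.E ∨ (v (j+1), v j) ∈ G.E)
    (hinj : ∀ j, j ≤ r → ∀ kk, kk ≤ r → v j = v kk → j = kk)
    (t : ℝ) (h0 : ∀ e ∈ G.E, 0 ≤ G.w e + pd G v r t e) :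
    WDG.cost α (tweak G (pd G v r t))
      = ∑ e ∈ G.E \ (Finset.range r).image (eEdge G v), (G.w e) ^ α * dist e.1 e.2
        + ∑ j ∈ Finset.range r,
            (G.w (eEdge G v j) + t * sgnP G v j) ^ α * dist (v j) (v (j+1)) := by
  have him : (Finset.range r).image (eEdge G v) ⊆ G.E := by
    intro e he
    rw [Finset.mem_image] at he
    obtain ⟨j, hj, rfl⟩ := he
    exact eEdge_mem hadj j (Finset.mem_range.mp hj)
  rw [tweak_cost_of_ne_zero hα G _ h0, ← Finset.sum_sdiff him]
  congr 1
  · refine Finset.sum_congr rfl ?_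
    intro e he
    rw [Finset.mem_sdiff] at he
    have hpd : pd G v r t e = 0 := by
      refine pd_eq_zero ?_
      intro j hj hje
      refine he.2 ?_
      rw [Finset.mem_image]
      exact ⟨j, Finset.mem_range.mpr hj, hje.symm⟩
    rw [hpd, add_zero]
  · rw [Finset.sum_image (fun j hj j' hj' h =>
      eEdge_inj hadj hinj (Finset.mem_range.mp hj) (Finset.mem_range.mp hj') h)]
    refine Finset.sum_congr rfl ?_
    intro j hj
    rw [eEdge_dist hadj (Finset.mem_range.mp hj),
      pd_apply hadj hinj t (Finset.mem_range.mp hj)]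

end Perturb

end Stmt5Aux6
section Stmt5Key

open Finset

variable {m k ℓ : ℕ}

lemma adjE_of_adjU {G : WDG m} {p q : Pt m} (h : G.undirected.Adj p q) :
    p ≠ q ∧ ((p, q) ∈ G.E ∨ (q, p) ∈ G.E) := by
  rw [WDG.undirected, SimpleGraph.fromRel_adj] at h
  exact h

lemma sgnP_neg_of_not_mem {G : WDG m} {v : ℕ → Pt m} {j : ℕ}
    (h : (v j, v (j+1)) ∉ G.E) : sgnP G v j = -1 := if_neg h

lemma supply_in_component {X : Set (Pt m)} {α : ℝ} (hα0 : 0 ≤ α)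
    {x : Fin k → Pt m} {y : Fin ℓ → Pt m} {n : Fin ℓ → ℝ} (hn : ∀ j, 0 < n j)
    {G : WDG m} {a : Pt m →₀ ℝ}
    (ha0 : ∀ z, 0 ≤ a z) (haR : ↑a.support ⊆ Set.range x) (haM : massOf a = 1)
    (hTP : IsTransportPath X G a (bMeas y n))
    (hOpt : ∀ G', IsAllocPath X x y n G' → WDG.cost α G ≤ WDG.cost α G')
    {xi xs : Pt m} (hreach : G.undirected.Reachable xi xs) (hne : xi ≠ xs) :
    ∃ z, z ∈ a.support ∧ G.undirected.Reachable xi z := by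
  have hb0 := bMeas_nonneg y n hn
  have hC := no_antiparallel hα0 ha0 haR haM hTP hOpt
  obtain ⟨r, v, hr, hv0, hvr, hadjU, hinj⟩ := path_data hreach hne
  have hadjE : ∀ j, j < r → (v j, v (j+1)) ∈ G.E ∨ (v (j+1), v j) ∈ G.E :=
    fun j hj => (adjE_of_adjU (hadjU j hj)).2
  have he0 : eEdge G v 0 ∈ G.E := eEdge_mem hadjE 0 hr
  obtain ⟨p₁, hp₁r, hp₁a⟩ := cut_supply hTP hb0 hC he0
  refine ⟨p₁, Finsupp.mem_support_iff.mpr (ne_of_gt hp₁a), ?_⟩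
  have hreachU : G.undirected.Reachable (eEdge G v 0).1 p₁ := hp₁r.mono (delGraph_le G _)
  have hxiv0 : xi = v 0 := hv0.symm
  rcases eEdge_cases hadjE 0 hr with ⟨he, -, -⟩ | ⟨he, -, -⟩
  · rw [he] at hreachU
    rw [hxiv0]
    exact hreachU
  · rw [he] at hreachU
    rw [hxiv0]
    exact (hadjU 0 hr).reachable.trans hreachU

lemma key (X : Set (Pt m)) (α : ℝ) (hα0 : 0 ≤ α) (hα1 : α < 1)
    (x : Fin k → Pt m) (y : Fin ℓ → Pt m) (n : Fin ℓ → ℝ) (hn : ∀ j, 0 < n j)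
    (xi xs : Pt m) (hxi : xi ∈ Set.range x) (hxs : xs ∈ Set.range x) (hne : xi ≠ xs) :
    ∀ N : ℕ, ∀ G : WDG m, ∀ a : Pt m →₀ ℝ,
      (∀ z, 0 ≤ a z) → ↑a.support ⊆ Set.range x → massOf a = 1 →
      IsTransportPath X G a (bMeas y n) →
      (∀ G', IsAllocPath X x y n G' → WDG.cost α G ≤ WDG.cost α G') →
      G.undirected.Reachable xi xs →
      (a.support.filter (fun z => G.undirected.Reachable xi z)).card ≤ N →
      False := by
  intro N
  induction N with
  | zero =>
    intro G a ha0 haR haM hTP hOpt hreach hcard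
    obtain ⟨z, hz1, hz2⟩ := supply_in_component hα0 hn ha0 haR haM hTP hOpt hreach hne
    have : z ∈ a.support.filter (fun z => G.undirected.Reachable xi z) :=
      Finset.mem_filter.mpr ⟨hz1, hz2⟩
    have := Finset.card_pos.mpr ⟨z, this⟩
    omega
  | succ N ih =>
    intro G a ha0 haR haM hTP hOpt hreach hcard
    have hb0 := bMeas_nonneg y n hn
    have hC := no_antiparallel hα0 ha0 haR haM hTP hOpt
    obtain ⟨z, hzsupp, hzreach⟩ :=
      supply_in_component hα0 hn ha0 haR haM hTP hOpt hreach hne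
    have hzA : z ∈ a.support.filter (fun z => G.undirected.Reachable xi z) :=
      Finset.mem_filter.mpr ⟨hzsupp, hzreach⟩
    by_cases htwo : ∃ p ∈ a.support.filter (fun z => G.undirected.Reachable xi z),
        ∃ q ∈ a.support.filter (fun z => G.undirected.Reachable xi z), p ≠ q
    · -- two distinct positive-supply points in the component of `xi`
      obtain ⟨p, hpA, q, hqA, hpq⟩ := htwo
      rw [Finset.mem_filter] at hpA hqA
      have hap : 0 < a p := lt_of_le_of_ne (ha0 p) (Ne.symm (Finsupp.mem_support_iff.mp hpA.1))
      have haq : 0 < a q := lt_of_le_of_ne (ha0 q) (Ne.symm (Finsupp.mem_support_iff.mp hqA.1))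
      have hpR : p ∈ Set.range x := haR hpA.1
      have hqR : q ∈ Set.range x := haR hqA.1
      obtain ⟨r, v, hr, hv0, hvr, hadjU, hinj⟩ := path_data (hpA.2.symm.trans hqA.2) hpq
      have hadjE : ∀ j, j < r → (v j, v (j+1)) ∈ G.E ∨ (v (j+1), v j) ∈ G.E :=
        fun j hj => (adjE_of_adjU (hadjU j hj)).2
      have hWpos : ∀ j, j < r → 0 < G.w (eEdge G v j) :=
        fun j hj => (hTP.1 _ (eEdge_mem hadjE j hj)).2.2.2
      have hLpos : ∀ j, j < r → 0 < dist (v j) (v (j+1)) :=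
        fun j hj => dist_pos.mpr (hadjU j hj).ne
      rcases hα0.eq_or_lt with hzα | hposα
      · -- α = 0
        subst hzα
        set D := (Finset.range r).filter (fun j => (v j, v (j+1)) ∉ G.E) with hD
        have hins : (insert (a q) (D.image (fun j => G.w (eEdge G v j)))).Nonempty :=
          Finset.insert_nonempty _ _
        set T := (insert (a q) (D.image (fun j => G.w (eEdge G v j)))).min' hins with hT
        have hTle_aq : T ≤ a q := Finset.min'_le _ _ (Finset.mem_insert_self _ _)
        have hTleW : ∀ j ∈ D, T ≤ G.w (eEdge G v j) := fun j hj =>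
          Finset.min'_le _ _ (Finset.mem_insert_of_mem (Finset.mem_image_of_mem _ hj))
        have hTpos : 0 < T := by
          rw [hT, Finset.lt_min'_iff]
          intro b hb
          rw [Finset.mem_insert] at hb
          rcases hb with hb | hb
          · rw [hb]; exact haq
          · rw [Finset.mem_image] at hb
            obtain ⟨j, hj, rfl⟩ := hb
            rw [hD, Finset.mem_filter] at hj
            exact hWpos j (Finset.mem_range.mp hj.1)
        have hDmem : ∀ j, j < r → (v j, v (j+1)) ∉ G.E → j ∈ D := fun j hj hnm => by
          rw [hD, Finset.mem_filter]; exact ⟨Finset.mem_range.mpr hj, hnm⟩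
        have h0 : ∀ e ∈ G.E, 0 ≤ G.w e + pd G v r T e := by
          intro e he
          by_cases hep : ∃ j, j < r ∧ e = eEdge G v j
          · obtain ⟨j, hj, rfl⟩ := hep
            rw [pd_apply hadjE hinj T hj]
            by_cases hmem : (v j, v (j+1)) ∈ G.E
            · rw [sgnP, if_pos hmem]
              have := hWpos j hj
              nlinarith [hTpos]
            · rw [sgnP_neg_of_not_mem hmem]
              have := hTleW j (hDmem j hj hmem)
              nlinarith [hWpos j hj]
          · push_neg at hep
            rw [pd_eq_zero (fun j hj => hep j hj), add_zero]
            exact ((hTP.1) e he).2.2.2.le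
        obtain ⟨ha'0, ha'R, ha'M, hTP'⟩ := perturb_alloc ha0 haR haM hTP hadjE hinj hr
          (by rw [hv0]; exact hpR) (by rw [hvr]; exact hqR) h0
          (by rw [hv0]; linarith) (by rw [hvr]; linarith)
        have hAlloc' : IsAllocPath X x y n (tweak G (pd G v r T)) :=
          ⟨_, ha'0, ha'R, ha'M, hTP'⟩
        have hco := hOpt _ hAlloc'
        by_cases hdeath : ∃ j, j < r ∧ G.w (eEdge G v j) + pd G v r T (eEdge G v j) ≤ 0
        · obtain ⟨j0, hj0, hwz⟩ := hdeath
          have hle := tweak_cost_zero_le (eEdge_mem hadjE j0 hj0) hwz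
          have hdp : 0 < dist (eEdge G v j0).1 (eEdge G v j0).2 :=
            dist_pos.mpr (hTP.1 _ (eEdge_mem hadjE j0 hj0)).2.2.1
          linarith
        · push_neg at hdeath
          have hpos : ∀ e ∈ G.E, 0 < G.w e + pd G v r T e := by
            intro e he
            by_cases hep : ∃ j, j < r ∧ e = eEdge G v j
            · obtain ⟨j, hj, rfl⟩ := hep
              exact hdeath j hj
            · push_neg at hep
              rw [pd_eq_zero (fun j hj => hep j hj), add_zero]
              exact (hTP.1 e he).2.2.2
          have hTaq : T = a q := by
            have hmm := Finset.min'_mem _ hins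
            rw [← hT, Finset.mem_insert] at hmm
            rcases hmm with h | h
            · exact h
            · exfalso
              rw [Finset.mem_image] at h
              obtain ⟨j, hj, hWj⟩ := h
              rw [hD, Finset.mem_filter] at hj
              have hjr := Finset.mem_range.mp hj.1
              have hd2 := hdeath j hjr
              rw [pd_apply hadjE hinj T hjr, sgnP_neg_of_not_mem hj.2] at hd2
              nlinarith
          have hE : (tweak G (pd G v r T)).E = G.E := by
            rw [tweak_E]; exact Finset.filter_eq_self.mpr hpos
          have hund := tweak_undirected_eq hpos
          have hcosteq : WDG.cost 0 (tweak G (pd G v r T)) = WDG.cost 0 G := by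
            rw [cost_zero_eq, cost_zero_eq, hE]
          refine ih (tweak G (pd G v r T)) (shiftMeas a (v 0) (v r) T)
            ha'0 ha'R ha'M hTP' ?_ ?_ ?_
          · intro G'' hG''
            rw [hcosteq]
            exact hOpt G'' hG''
          · rw [hund]; exact hreach
          · rw [hund]
            have hsub : (shiftMeas a (v 0) (v r) T).support.filter
                (fun z => G.undirected.Reachable xi z)
                ⊆ (a.support.filter (fun z => G.undirected.Reachable xi z)).erase q := by
              intro w hw
              rw [Finset.mem_filter] at hw
              have hwne := Finsupp.mem_support_iff.mp hw.1
              rw [shiftMeas_apply, hv0, hvr] at hwne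
              rw [Finset.mem_erase, Finset.mem_filter]
              by_cases hwq : w = q
              · exfalso
                subst hwq
                rw [if_neg (fun hh => hpq hh), if_pos rfl] at hwne
                apply hwne
                rw [hTaq]; ring
              · refine ⟨hwq, ?_, hw.2⟩
                rw [Finsupp.mem_support_iff]
                by_cases hwp : w = p
                · subst hwp
                  exact ne_of_gt hap
                · rw [if_neg (fun hh => hwp hh.symm),
                    if_neg (fun hh => hwq hh.symm)] at hwne
                  intro h
                  exact hwne (by rw [h]; ring)
            have hqmem : q ∈ a.support.filter (fun z => G.undirected.Reachable xi z) :=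
              Finset.mem_filter.mpr hqA
            have hcard2 := Finset.card_le_card hsub
            have hcard3 := Finset.card_erase_of_mem hqmem
            have hcard4 := Finset.card_pos.mpr ⟨q, hqmem⟩
            omega
      · -- 0 < α
        have hαne : α ≠ 0 := ne_of_gt hposα
        have hrne : (Finset.range r).Nonempty := ⟨0, Finset.mem_range.mpr hr⟩
        have himne : ((Finset.range r).image (fun j => G.w (eEdge G v j))).Nonempty :=
          hrne.image _
        set wmin := ((Finset.range r).image (fun j => G.w (eEdge G v j))).min' himne with hwm
        have hwminle : ∀ j, j < r → wmin ≤ G.w (eEdge G v j) := fun j hj =>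
          Finset.min'_le _ _ (Finset.mem_image_of_mem _ (Finset.mem_range.mpr hj))
        have hwminpos : 0 < wmin := by
          rw [hwm, Finset.lt_min'_iff]
          intro b hb
          rw [Finset.mem_image] at hb
          obtain ⟨j, hj, rfl⟩ := hb
          exact hWpos j (Finset.mem_range.mp hj)
        set M := min (min (a p) (a q)) wmin with hM
        have hMpos : 0 < M := lt_min (lt_min hap haq) hwminpos
        set ε := M / 2 with hε
        have hεpos : 0 < ε := by rw [hε]; linarith
        have hεap : ε ≤ a p := by
          have h1 : M ≤ a p := le_trans (min_le_left _ _) (min_le_left _ _)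
          rw [hε]; linarith
        have hεaq : ε ≤ a q := by
          have h1 : M ≤ a q := le_trans (min_le_left _ _) (min_le_right _ _)
          rw [hε]; linarith
        have hεW : ∀ j, j < r → ε < G.w (eEdge G v j) := by
          intro j hj
          have h1 : M ≤ wmin := min_le_right _ _
          have h2 := hwminle j hj
          rw [hε]; linarith
        have hsgn2 : ∀ j, j < r → sgnP G v j = 1 ∨ sgnP G v j = -1 := by
          intro j hj
          rw [sgnP]
          split
          · exact Or.inl rfl
          · exact Or.inr rfl
        have h0e : ∀ (t : ℝ), |t| ≤ ε → ∀ e ∈ G.E, 0 ≤ G.w e + pd G v r t e := by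
          intro t ht e he
          by_cases hep : ∃ j, j < r ∧ e = eEdge G v j
          · obtain ⟨j, hj, rfl⟩ := hep
            rw [pd_apply hadjE hinj t hj]
            rw [abs_le] at ht
            have h2 := hεW j hj
            rcases hsgn2 j hj with h | h <;> rw [h] <;> nlinarith
          · push_neg at hep
            rw [pd_eq_zero (fun j hj => hep j hj), add_zero]
            exact (hTP.1 e he).2.2.2.le
        have habs : |ε| ≤ ε := by rw [abs_of_pos hεpos]
        have habs' : |(-ε)| ≤ ε := by rw [abs_neg, abs_of_pos hεpos]
        obtain ⟨hA1, hA2, hA3, hTP1⟩ := perturb_alloc ha0 haR haM hTP hadjE hinj hr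
          (by rw [hv0]; exact hpR) (by rw [hvr]; exact hqR) (h0e ε habs)
          (by rw [hv0]; linarith) (by rw [hvr]; linarith)
        obtain ⟨hB1, hB2, hB3, hTP2⟩ := perturb_alloc ha0 haR haM hTP hadjE hinj hr
          (by rw [hv0]; exact hpR) (by rw [hvr]; exact hqR) (h0e (-ε) habs')
          (by rw [hv0]; linarith) (by rw [hvr]; linarith)
        have hco1 := hOpt _ ⟨_, hA1, hA2, hA3, hTP1⟩
        have hco2 := hOpt _ ⟨_, hB1, hB2, hB3, hTP2⟩
        rw [perturb_cost hαne hadjE hinj ε (h0e ε habs),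
          cost_split α hadjE hinj] at hco1
        rw [perturb_cost hαne hadjE hinj (-ε) (h0e (-ε) habs'),
          cost_split α hadjE hinj] at hco2
        have hkey : ∀ j ∈ Finset.range r,
            (G.w (eEdge G v j) + ε * sgnP G v j) ^ α * dist (v j) (v (j+1))
              + (G.w (eEdge G v j) + (-ε) * sgnP G v j) ^ α * dist (v j) (v (j+1))
            < 2 * ((G.w (eEdge G v j)) ^ α * dist (v j) (v (j+1))) := by
          intro j hj
          rw [Finset.mem_range] at hj
          have hcp : (G.w (eEdge G v j) + ε) ^ α + (G.w (eEdge G v j) - ε) ^ α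
              < 2 * (G.w (eEdge G v j)) ^ α := concave_pair hposα hα1 hεpos (hεW j hj)
          have hL := hLpos j hj
          rcases hsgn2 j hj with h | h
          · rw [h, show G.w (eEdge G v j) + ε * 1 = G.w (eEdge G v j) + ε by ring,
              show G.w (eEdge G v j) + (-ε) * 1 = G.w (eEdge G v j) - ε by ring]
            linarith [mul_lt_mul_of_pos_right hcp hL]
          · rw [h, show G.w (eEdge G v j) + ε * (-1) = G.w (eEdge G v j) - ε by ring,
              show G.w (eEdge G v j) + (-ε) * (-1) = G.w (eEdge G v j) + ε by ring]
            linarith [mul_lt_mul_of_pos_right hcp hL]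
        have hlt := Finset.sum_lt_sum_of_nonempty hrne hkey
        rw [Finset.sum_add_distrib, ← Finset.mul_sum] at hlt
        linarith
    · -- exactly one positive-supply point `z` in the component
      push_neg at htwo
      have hzuniq : ∀ w, w ∈ a.support.filter (fun z => G.undirected.Reachable xi z) → w = z :=
        fun w hw => htwo w hw z hzA
      have haz : 0 < a z := lt_of_le_of_ne (ha0 z) (Ne.symm (Finsupp.mem_support_iff.mp hzsupp))
      have hzR : z ∈ Set.range x := haR hzsupp
      obtain ⟨xq, hxqR, hxqreach, hxqne⟩ :
          ∃ xq, xq ∈ Set.range x ∧ G.undirected.Reachable xi xq ∧ xq ≠ z := by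
        by_cases hzxi : z = xi
        · exact ⟨xs, hxs, hreach, fun h => hne ((h.trans hzxi).symm)⟩
        · exact ⟨xi, hxi, SimpleGraph.Reachable.refl _, fun h => hzxi h.symm⟩
      have haxq : a xq = 0 := by
        by_contra h
        exact hxqne (hzuniq xq (Finset.mem_filter.mpr ⟨Finsupp.mem_support_iff.mpr h, hxqreach⟩))
      obtain ⟨r, v, hr, hv0, hvr, hadjU, hinj⟩ :=
        path_data (hxqreach.symm.trans hzreach) hxqne
      have hadjE : ∀ j, j < r → (v j, v (j+1)) ∈ G.E ∨ (v (j+1), v j) ∈ G.E :=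
        fun j hj => (adjE_of_adjU (hadjU j hj)).2
      have hWpos : ∀ j, j < r → 0 < G.w (eEdge G v j) :=
        fun j hj => (hTP.1 _ (eEdge_mem hadjE j hj)).2.2.2
      have hLpos : ∀ j, j < r → 0 < dist (v j) (v (j+1)) :=
        fun j hj => dist_pos.mpr (hadjU j hj).ne
      have hreachv : ∀ j, j ≤ r → G.undirected.Reachable xi (v j) := by
        intro j hj
        refine hxqreach.trans ?_
        rw [← hv0]
        exact reach_of_steps v 0 j (by omega) (fun jj _ hjj => hadjU jj (by omega))
      have hbwd : ∀ j, j < r → (v j, v (j+1)) ∉ G.E := by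
        intro j hj hfwd
        have hcut := cut_lemma hTP hC hfwd
        obtain ⟨p₁, hp₁r, hp₁a⟩ := cut_supply hTP hb0 hC hfwd
        have hp₁z : p₁ = z := by
          apply hzuniq
          refine Finset.mem_filter.mpr
            ⟨Finsupp.mem_support_iff.mpr (ne_of_gt hp₁a), ?_⟩
          exact (hreachv j (le_of_lt hj)).trans (hp₁r.mono (delGraph_le G _))
        subst hp₁z
        have hstep : ∀ mm, j+1 ≤ mm → mm < r →
            (delGraph G (v j, v (j+1))).Adj (v mm) (v (mm+1)) := by
          intro mm h1 h2
          rw [delGraph, SimpleGraph.fromRel_adj]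
          refine ⟨(hadjU mm h2).ne, ?_⟩
          rcases eEdge_cases hadjE mm h2 with ⟨he, -, hmem⟩ | ⟨he, -, hmem⟩
          · refine Or.inl (Finset.mem_erase.mpr ⟨?_, hmem⟩)
            intro hh
            rw [Prod.mk.injEq] at hh
            have := hinj mm (by omega) j (by omega) hh.1
            omega
          · refine Or.inr (Finset.mem_erase.mpr ⟨?_, hmem⟩)
            intro hh
            rw [Prod.mk.injEq] at hh
            have := hinj (mm+1) (by omega) j (by omega) hh.1
            omega
        have hr2 : (delGraph G (v j, v (j+1))).Reachable (v (j+1)) (v r) :=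
          reach_of_steps v (j+1) r (by omega) hstep
        rw [hvr] at hr2
        exact hcut.1 (hp₁r.trans hr2.symm)
      have hnoin : ∀ u', (u', z) ∈ G.E → False := by
        intro u' hu'
        have hcut := cut_lemma hTP hC hu'
        obtain ⟨p₁, hp₁r, hp₁a⟩ := cut_supply hTP hb0 hC hu'
        have hadjuz : G.undirected.Adj u' z := by
          rw [WDG.undirected, SimpleGraph.fromRel_adj]
          exact ⟨(hTP.1 _ hu').2.2.1, Or.inl hu'⟩
        have hp₁z : p₁ = z := by
          apply hzuniq
          refine Finset.mem_filter.mpr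
            ⟨Finsupp.mem_support_iff.mpr (ne_of_gt hp₁a), ?_⟩
          exact (hzreach.trans hadjuz.symm.reachable).trans (hp₁r.mono (delGraph_le G _))
        subst hp₁z
        exact hcut.1 hp₁r
      have hjlast : r - 1 < r := by omega
      have hsucc : r - 1 + 1 = r := by omega
      have hbwdlast : (v (r-1), v r) ∉ G.E := by
        have := hbwd (r-1) hjlast
        rwa [hsucc] at this
      have hellast : eEdge G v (r-1) = (v r, v (r-1)) := by
        rw [eEdge, hsucc, if_neg hbwdlast]
      have houtge : G.w (eEdge G v (r-1)) ≤ G.outflow z := by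
        rw [WDG.outflow]
        refine Finset.single_le_sum (f := fun e => G.w e) (fun e' he' => ?_) ?_
        · rw [Finset.mem_filter] at he'
          exact ((hTP.1 e' he'.1).2.2.2).le
        · rw [Finset.mem_filter]
          refine ⟨eEdge_mem hadjE (r-1) hjlast, ?_⟩
          rw [hellast]
          exact hvr
      have hinz : G.inflow z = 0 := by
        rw [WDG.inflow]
        have hemp : G.E.filter (fun e => e.2 = z) = ∅ := by
          rw [Finset.filter_eq_empty_iff]
          intro e' he' hz2
          refine hnoin e'.1 ?_
          have heta : (e'.1, z) = e' := by
            rw [← hz2]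
          rw [heta]
          exact he'
        rw [hemp, Finset.sum_empty]
      have hazW : G.w (eEdge G v (r-1)) ≤ a z := by
        have hbz := hTP.2.2.2.2.2 z
        rw [hinz] at hbz
        have := hb0 z
        linarith
      have hrne : (Finset.range r).Nonempty := ⟨0, Finset.mem_range.mpr hr⟩
      have himne : ((Finset.range r).image (fun j => G.w (eEdge G v j))).Nonempty :=
        hrne.image _
      set T := ((Finset.range r).image (fun j => G.w (eEdge G v j))).min' himne with hT
      have hTle : ∀ j, j < r → T ≤ G.w (eEdge G v j) := fun j hj =>
        Finset.min'_le _ _ (Finset.mem_image_of_mem _ (Finset.mem_range.mpr hj))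
      have hTpos : 0 < T := by
        rw [hT, Finset.lt_min'_iff]
        intro b hb
        rw [Finset.mem_image] at hb
        obtain ⟨j, hj, rfl⟩ := hb
        exact hWpos j (Finset.mem_range.mp hj)
      obtain ⟨j0, hj0, hWj0⟩ : ∃ j0, j0 < r ∧ G.w (eEdge G v j0) = T := by
        have hmm := Finset.min'_mem _ himne
        rw [← hT, Finset.mem_image] at hmm
        obtain ⟨j, hj, hW⟩ := hmm
        exact ⟨j, Finset.mem_range.mp hj, hW⟩
      have hsgnneg : ∀ j, j < r → sgnP G v j = -1 := fun j hj =>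
        sgnP_neg_of_not_mem (hbwd j hj)
      have h0 : ∀ e ∈ G.E, 0 ≤ G.w e + pd G v r T e := by
        intro e he
        by_cases hep : ∃ j, j < r ∧ e = eEdge G v j
        · obtain ⟨j, hj, rfl⟩ := hep
          rw [pd_apply hadjE hinj T hj, hsgnneg j hj]
          have := hTle j hj
          linarith
        · push_neg at hep
          rw [pd_eq_zero (fun j hj => hep j hj), add_zero]
          exact (hTP.1 e he).2.2.2.le
      have hTaz : T ≤ a z := le_trans (hTle (r-1) hjlast) hazW
      obtain ⟨hA1, hA2, hA3, hTP'⟩ := perturb_alloc ha0 haR haM hTP hadjE hinj hr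
        (by rw [hv0]; exact hxqR) (by rw [hvr]; exact hzR) h0
        (by rw [hv0, haxq]; linarith) (by rw [hvr]; linarith)
      have hco := hOpt _ ⟨_, hA1, hA2, hA3, hTP'⟩
      have hdead : G.w (eEdge G v j0) + pd G v r T (eEdge G v j0) = 0 := by
        rw [pd_apply hadjE hinj T hj0, hsgnneg j0 hj0, hWj0]
        ring
      rcases hα0.eq_or_lt with hzα | hposα
      · have hle := tweak_cost_zero_le (eEdge_mem hadjE j0 hj0) (le_of_eq hdead)
        have hdp : 0 < dist (eEdge G v j0).1 (eEdge G v j0).2 :=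
          dist_pos.mpr (hTP.1 _ (eEdge_mem hadjE j0 hj0)).2.2.1
        rw [← hzα] at hco
        linarith
      · have hαne : α ≠ 0 := ne_of_gt hposα
        rw [perturb_cost hαne hadjE hinj T h0, cost_split α hadjE hinj] at hco
        have hlt : ∑ j ∈ Finset.range r,
            (G.w (eEdge G v j) + T * sgnP G v j) ^ α * dist (v j) (v (j+1))
            < ∑ j ∈ Finset.range r, (G.w (eEdge G v j)) ^ α * dist (v j) (v (j+1)) := by
          refine Finset.sum_lt_sum (fun j hj => ?_) ⟨j0, Finset.mem_range.mpr hj0, ?_⟩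
          · rw [Finset.mem_range] at hj
            have h1 : (G.w (eEdge G v j) + T * sgnP G v j) ^ α
                ≤ (G.w (eEdge G v j)) ^ α := by
              rw [hsgnneg j hj]
              refine Real.rpow_le_rpow ?_ ?_ hα0
              · have := hTle j hj; linarith
              · linarith
            exact mul_le_mul_of_nonneg_right h1 dist_nonneg
          · have h1 : (G.w (eEdge G v j0) + T * sgnP G v j0) ^ α
                < (G.w (eEdge G v j0)) ^ α := by
              have hz2 : G.w (eEdge G v j0) + T * sgnP G v j0 = 0 := by
                rw [hsgnneg j0 hj0, hWj0]; ring
              rw [hz2, Real.zero_rpow hαne]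
              exact Real.rpow_pos_of_pos (hWpos j0 hj0) α
            exact mul_lt_mul_of_pos_right h1 (hLpos j0 hj0)
        linarith

end Stmt5Key

/-- On an optimal allocation path, two distinct factories are
never joined by a sequence of edges (in the underlying undirected graph). -/
theorem stmt_5 {m k ℓ : ℕ} (X : Set (Pt m)) (hXc : IsCompact X) (hXconv : Convex ℝ X)
    (α : ℝ) (hα0 : 0 ≤ α) (hα1 : α < 1)
    (x : Fin k → Pt m) (hxinj : Function.Injective x) (hxX : ∀ i, x i ∈ X)
    (y : Fin ℓ → Pt m) (hyinj : Function.Injective y) (hyX : ∀ j, y j ∈ X)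
    (n : Fin ℓ → ℝ) (hn : ∀ j, 0 < n j) (hnsum : ∑ j, n j = 1)
    (G : WDG m) (hG : IsOptimalAllocPath X α x y n G) :
    ∀ i s : Fin k, i ≠ s → ¬ G.undirected.Reachable (x i) (x s) := by
  intro i s his hreach
  obtain ⟨⟨a, ha0, haR, haM, hTP⟩, hOpt⟩ := hG
  exact key X α hα0 hα1 x y n hn (x i) (x s) ⟨i, rfl⟩ ⟨s, rfl⟩
    (fun h => his (hxinj h)) _ G a ha0 haR haM hTP hOpt hreach le_rfl

end
end

section
/- Let G be an optimal allocation path from x to b. Then there exists an assignment map S : {1,…,ℓ} → {1,…,k} such that E_α(S) = M_α(G); moreover, G decomposes as the disjoint union G = G_1 ∪ … ∪ G_k of subgraphs with M_α(G) = Σ_{i=1}^k M_α(G_i), where for each i with S^{-1}(i) ≠ ∅, G_i is an optimal transport path from m(b_i)·δ_{x_i} to b_i (so that M_α(G_i) = d_α(m(b_i)·δ_{x_i}, b_i)), and G_i is empty if S^{-1}(i) = ∅. -/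
open scoped BigOperators RealInnerProductSpace

noncomputable section

attribute [local instance] Classical.propDecidable

namespace Stmt6Aux
open SimpleGraph Finset

variable {m : ℕ}

/-! ### rpow facts -/

lemma rpow_subadd {α a b : ℝ} (hα0 : 0 ≤ α) (hα1 : α ≤ 1)
    (ha : 0 ≤ a) (hb : 0 ≤ b) : (a + b) ^ α ≤ a ^ α + b ^ α := by
  rcases eq_or_lt_of_le hα0 with h0 | hα0'
  · simp [← h0, Real.rpow_zero]
  rcases eq_or_lt_of_le ha with h | ha'
  · simp [← h, Real.zero_rpow (ne_of_gt hα0')]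
  rcases eq_or_lt_of_le hb with h | hb'
  · simp [← h, Real.zero_rpow (ne_of_gt hα0')]
  have hs : 0 < a + b := by linarith
  have key : ∀ c : ℝ, 0 < c → c ≤ a + b → (a+b)^α * (c / (a+b)) ≤ c ^ α := by
    intro c hc hcs
    have h1 : c = (c / (a+b)) * (a+b) := by field_simp
    have h2 : c ^ α = (c / (a+b)) ^ α * (a+b) ^ α := by
      rw [h1, Real.mul_rpow (by positivity) (le_of_lt hs)]
      rw [← h1]
    rw [h2]
    have h3 : (c / (a+b)) ^ (1:ℝ) ≤ (c / (a+b)) ^ α :=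
      Real.rpow_le_rpow_of_exponent_ge (by positivity)
        (by rw [div_le_one hs]; exact hcs) hα1
    rw [Real.rpow_one] at h3
    have h4 : (0:ℝ) ≤ (a+b)^α := Real.rpow_nonneg (le_of_lt hs) _
    calc (a+b)^α * (c/(a+b)) ≤ (a+b)^α * ((c/(a+b))^α) := by nlinarith
      _ = (c / (a+b)) ^ α * (a+b) ^ α := by ring
  have k1 := key a ha' (by linarith)
  have k2 := key b hb' (by linarith)
  have : (a+b)^α * (a/(a+b)) + (a+b)^α * (b/(a+b)) = (a+b)^α := by
    field_simp
  linarith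

lemma rpow_combo_ge {α A B lam mu : ℝ} (hα0 : 0 ≤ α) (hα1 : α ≤ 1)
    (hA : 0 ≤ A) (hB : 0 ≤ B) (hlam : 0 ≤ lam) (hmu : 0 ≤ mu) (hs : lam + mu = 1) :
    lam * A ^ α + mu * B ^ α ≤ (lam * A + mu * B) ^ α := by
  have := (Real.concaveOn_rpow hα0 hα1).2 (Set.mem_Ici.mpr hA) (Set.mem_Ici.mpr hB)
    hlam hmu hs
  simpa [smul_eq_mul] using this

lemma rpow_combo_gt {α A B : ℝ} (hα0 : 0 < α) (hα1 : α < 1)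
    (hA : 0 ≤ A) (hB : 0 ≤ B) (hAB : A ≠ B) :
    (1/2) * A ^ α + (1/2) * B ^ α < ((1/2) * A + (1/2) * B) ^ α := by
  have := (Real.strictConcaveOn_rpow hα0 hα1).2 (Set.mem_Ici.mpr hA) (Set.mem_Ici.mpr hB)
    hAB (by norm_num : (0:ℝ) < 1/2) (by norm_num : (0:ℝ) < 1/2) (by norm_num)
  simpa [smul_eq_mul] using this

/-! ### basic WDG facts -/

lemma cost_nonneg {α : ℝ} {G : WDG m} (hOK : G.edgesOK) : 0 ≤ WDG.cost α G := by
  apply Finset.sum_nonneg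
  intro e he
  exact mul_nonneg (Real.rpow_nonneg (le_of_lt (hOK e he).2.2.2) _) dist_nonneg

lemma undirected_adj {G : WDG m} {u v : Pt m} :
    G.undirected.Adj u v ↔ u ≠ v ∧ ((u,v) ∈ G.E ∨ (v,u) ∈ G.E) := by
  unfold WDG.undirected
  rw [SimpleGraph.fromRel_adj]

lemma adj_of_mem {G : WDG m} (hOK : G.edgesOK) {e : Pt m × Pt m} (he : e ∈ G.E) :
    G.undirected.Adj e.1 e.2 :=
  undirected_adj.mpr ⟨(hOK e he).2.2.1, Or.inl (by simpa using he)⟩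

lemma undirected_mono {G H : WDG m} (hV : G.E ⊆ H.E) : G.undirected ≤ H.undirected := by
  intro u v h
  rw [undirected_adj] at h ⊢
  exact ⟨h.1, h.2.imp (fun x => hV x) (fun x => hV x)⟩

lemma acyclic_of_le {A B : SimpleGraph (Pt m)} (hle : A ≤ B) (h : B.IsAcyclic) :
    A.IsAcyclic := by
  intro v c hc
  exact h (c.mapLe hle) (hc.mapLe hle)

lemma acyclic_of_empty {G : WDG m} (hE : G.E = ∅) : G.undirected.IsAcyclic := by
  intro v c hc
  cases c with
  | nil => exact hc.ne_nil rfl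
  | cons h p =>
    rw [undirected_adj, hE] at h
    simpa using h.2


open SimpleGraph Finset
variable {m : ℕ}


/-! ### step choice and sign function along a walk -/

/-- For an adjacency `a ~ b` in the undirected graph, the directed edge realizing it,
together with its sign (+1 if it goes `a → b`). -/
def stepD (G : WDG m) (a b : Pt m) : (Pt m × Pt m) × ℝ :=
  if (a, b) ∈ G.E then ((a, b), 1) else ((b, a), -1)

lemma stepD_mem {G : WDG m} {a b : Pt m} (h : G.undirected.Adj a b) :
    (stepD G a b).1 ∈ G.E := by
  rw [undirected_adj] at h
  unfold stepD
  split
  · assumption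
  · rcases h.2 with h2 | h2
    · exact absurd h2 (by assumption)
    · exact h2

lemma stepD_sym2 (G : WDG m) (a b : Pt m) :
    Sym2.mk (stepD G a b).1.1 (stepD G a b).1.2 = s(a, b) := by
  unfold stepD
  split <;> simp [Sym2.eq_swap]

/-- The (signed multiplicity) with which a walk uses a given directed edge. -/
def sgn (G : WDG m) : {u v : Pt m} → G.undirected.Walk u v → (Pt m × Pt m) → ℝ
  | _, _, SimpleGraph.Walk.nil, _ => 0
  | _, _, @SimpleGraph.Walk.cons _ _ a c _ _ p, e =>
      (if e = (stepD G a c).1 then (stepD G a c).2 else 0) + sgn G p e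

@[simp] lemma sgn_nil (G : WDG m) {u : Pt m} (e : Pt m × Pt m) :
    sgn G (SimpleGraph.Walk.nil : G.undirected.Walk u u) e = 0 := rfl

lemma sgn_cons (G : WDG m) {a c v : Pt m} (h : G.undirected.Adj a c)
    (p : G.undirected.Walk c v) (e : Pt m × Pt m) :
    sgn G (SimpleGraph.Walk.cons h p) e =
      (if e = (stepD G a c).1 then (stepD G a c).2 else 0) + sgn G p e := rfl

lemma sgn_ne_zero_mem {G : WDG m} : ∀ {u v : Pt m} (p : G.undirected.Walk u v)
    (e : Pt m × Pt m), sgn G p e ≠ 0 → e ∈ G.E ∧ Sym2.mk e.1 e.2 ∈ p.edges := by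
  intro u v p
  induction p with
  | nil => intro e he; simp at he
  | @cons a c _ h p ih =>
    intro e he
    rw [sgn_cons] at he
    by_cases hc : e = (stepD G a c).1
    · subst hc
      refine ⟨stepD_mem h, ?_⟩
      rw [stepD_sym2]
      simp [SimpleGraph.Walk.edges_cons]
    · rw [if_neg hc, zero_add] at he
      obtain ⟨h1, h2⟩ := ih e he
      exact ⟨h1, by simp [SimpleGraph.Walk.edges_cons, h2]⟩

lemma sgn_cases {G : WDG m} : ∀ {u v : Pt m} (p : G.undirected.Walk u v),
    p.edges.Nodup → ∀ (e : Pt m × Pt m),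
    sgn G p e = 0 ∨ sgn G p e = 1 ∨ sgn G p e = -1 := by
  intro u v p
  induction p with
  | nil => intro _ e; simp
  | @cons a c _ h p ih =>
    intro hnd e
    rw [SimpleGraph.Walk.edges_cons, List.nodup_cons] at hnd
    rw [sgn_cons]
    by_cases hc : e = (stepD G a c).1
    · subst hc
      have htail : sgn G p (stepD G a c).1 = 0 := by
        by_contra hne
        have := (sgn_ne_zero_mem p _ hne).2
        rw [stepD_sym2] at this
        exact hnd.1 this
      rw [if_pos rfl, htail, add_zero]
      unfold stepD
      split <;> simp
    · rw [if_neg hc, zero_add]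
      exact ih hnd.2 e

lemma sgn_first {G : WDG m} {a c v : Pt m} (h : G.undirected.Adj a c)
    (p : G.undirected.Walk c v) (hnd : (SimpleGraph.Walk.cons h p).edges.Nodup) :
    sgn G (SimpleGraph.Walk.cons h p) ((stepD G a c).1) = (stepD G a c).2 := by
  rw [SimpleGraph.Walk.edges_cons, List.nodup_cons] at hnd
  rw [sgn_cons, if_pos rfl]
  have htail : sgn G p (stepD G a c).1 = 0 := by
    by_contra hne
    have := (sgn_ne_zero_mem p _ hne).2
    rw [stepD_sym2] at this
    exact hnd.1 this
  rw [htail, add_zero]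

/-- Telescoping: the net sign-flux at a vertex. -/
lemma sgn_flux {G : WDG m} : ∀ {u u' : Pt m} (p : G.undirected.Walk u u') (v : Pt m),
    (∑ e ∈ G.E.filter (fun e => e.1 = v), sgn G p e)
      - (∑ e ∈ G.E.filter (fun e => e.2 = v), sgn G p e)
    = (if u = v then (1:ℝ) else 0) - (if u' = v then 1 else 0) := by
  intro u u' p
  induction p with
  | nil => intro v; simp
  | @cons a c u' h p ih =>
    intro v
    have hmem := stepD_mem h
    have step1 : ∀ (P : Pt m × Pt m → Prop) [DecidablePred P],
        (∑ e ∈ G.E.filter P, (if e = (stepD G a c).1 then (stepD G a c).2 else 0))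
        = if P (stepD G a c).1 then (stepD G a c).2 else 0 := by
      intro P _
      rw [Finset.sum_ite_eq' (G.E.filter P) ((stepD G a c).1) (fun _ => (stepD G a c).2)]
      by_cases hP : P (stepD G a c).1
      · rw [if_pos (Finset.mem_filter.mpr ⟨hmem, hP⟩), if_pos hP]
      · rw [if_neg, if_neg hP]
        intro hmm
        exact hP (Finset.mem_filter.mp hmm).2
    have expand : ∀ (P : Pt m × Pt m → Prop) [DecidablePred P],
        (∑ e ∈ G.E.filter P, sgn G (SimpleGraph.Walk.cons h p) e)
        = (if P (stepD G a c).1 then (stepD G a c).2 else 0)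
          + ∑ e ∈ G.E.filter P, sgn G p e := by
      intro P _
      simp only [sgn_cons]
      rw [Finset.sum_add_distrib, step1]
    rw [expand, expand]
    have hih := ih v
    have key : (if ((stepD G a c).1).1 = v then (stepD G a c).2 else 0)
        - (if ((stepD G a c).1).2 = v then (stepD G a c).2 else 0)
        = (if a = v then (1:ℝ) else 0) - (if c = v then 1 else 0) := by
      unfold stepD
      split
      · simp
      · simp only []
        by_cases h1 : c = v <;> by_cases h2 : a = v <;> simp [h1, h2]
    ring_nf
    ring_nf at key hih
    linarith [key, hih]


/-! ### modification of a WDG along a sign function -/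

def wmod (G : WDG m) (s : Pt m × Pt m → ℝ) (t : ℝ) : WDG m :=
  ⟨G.V, G.E.filter (fun e => G.w e + t * s e ≠ 0), fun e => G.w e + t * s e⟩

lemma wmod_sum_eq (G : WDG m) (s : Pt m × Pt m → ℝ) (t : ℝ)
    (P : Pt m × Pt m → Prop) [DecidablePred P] :
    ∑ e ∈ (wmod G s t).E.filter P, (wmod G s t).w e
      = ∑ e ∈ G.E.filter P, (G.w e + t * s e) := by
  apply Finset.sum_subset
  · intro e he
    rw [Finset.mem_filter] at he ⊢
    exact ⟨(Finset.mem_filter.mp he.1).1, he.2⟩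
  · intro e he hne
    rw [Finset.mem_filter] at he
    by_contra hww
    exact hne (Finset.mem_filter.mpr ⟨Finset.mem_filter.mpr ⟨he.1, hww⟩, he.2⟩)

lemma wmod_outflow_sub_inflow (G : WDG m) (s : Pt m × Pt m → ℝ) (t : ℝ) (v : Pt m) :
    (wmod G s t).outflow v - (wmod G s t).inflow v
      = (G.outflow v - G.inflow v)
        + t * ((∑ e ∈ G.E.filter (fun e => e.1 = v), s e)
              - (∑ e ∈ G.E.filter (fun e => e.2 = v), s e)) := by
  unfold WDG.outflow WDG.inflow
  rw [wmod_sum_eq, wmod_sum_eq, Finset.sum_add_distrib, Finset.sum_add_distrib]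
  rw [← Finset.mul_sum, ← Finset.mul_sum]
  ring

lemma wmod_edgesOK {G : WDG m} {s : Pt m × Pt m → ℝ} {t : ℝ} (hOK : G.edgesOK)
    (hpos : ∀ e ∈ G.E, 0 ≤ G.w e + t * s e) : (wmod G s t).edgesOK := by
  intro e he
  rw [wmod, Finset.mem_filter] at he
  obtain ⟨h1, h2, h3, _⟩ := hOK e he.1
  exact ⟨h1, h2, h3, lt_of_le_of_ne (hpos e he.1) (Ne.symm he.2)⟩

lemma wmod_E_subset (G : WDG m) (s : Pt m × Pt m → ℝ) (t : ℝ) :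
    (wmod G s t).E ⊆ G.E := Finset.filter_subset _ _

lemma wmod_cost_le_erase {α : ℝ} {G : WDG m} {s : Pt m × Pt m → ℝ} {t : ℝ}
    (hpos : ∀ e ∈ G.E, 0 ≤ G.w e + t * s e) {e₀ : Pt m × Pt m} (he₀ : e₀ ∈ G.E)
    (hz : G.w e₀ + t * s e₀ = 0) :
    WDG.cost α (wmod G s t)
      ≤ ∑ e ∈ G.E.erase e₀, (G.w e + t * s e) ^ α * dist e.1 e.2 := by
  apply Finset.sum_le_sum_of_subset_of_nonneg
  · intro e he
    rw [wmod, Finset.mem_filter] at he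
    rw [Finset.mem_erase]
    refine ⟨?_, he.1⟩
    rintro rfl
    exact he.2 hz
  · intro e he _
    exact mul_nonneg (Real.rpow_nonneg (hpos e (Finset.mem_of_mem_erase he)) _) dist_nonneg

lemma sum_erase_le_sum {α : ℝ} {G : WDG m} {s : Pt m × Pt m → ℝ} {t : ℝ}
    (hpos : ∀ e ∈ G.E, 0 ≤ G.w e + t * s e) (e₀ : Pt m × Pt m) :
    ∑ e ∈ G.E.erase e₀, (G.w e + t * s e) ^ α * dist e.1 e.2
      ≤ ∑ e ∈ G.E, (G.w e + t * s e) ^ α * dist e.1 e.2 := by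
  apply Finset.sum_le_sum_of_subset_of_nonneg (Finset.erase_subset _ _)
  intro e he _
  exact mul_nonneg (Real.rpow_nonneg (hpos e he) _) dist_nonneg

/-! ### acyclification: any balanced graph admits an acyclic transport path of no larger cost -/

lemma exists_acyclic_TP {X : Set (Pt m)} {α : ℝ} (hα0 : 0 ≤ α) (hα1 : α ≤ 1) :
    ∀ (N : ℕ) (H : WDG m) (a b : Pt m →₀ ℝ), H.E.card ≤ N → H.edgesOK → ↑H.V ⊆ X →
    (∀ z ∈ a.support, z ∈ H.V) → (∀ z ∈ b.support, z ∈ H.V) →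
    (∀ v, H.outflow v - H.inflow v = a v - b v) →
    ∃ H', IsTransportPath X H' a b ∧ WDG.cost α H' ≤ WDG.cost α H := by
  intro N
  induction N with
  | zero =>
    intro H a b hcard hOK hVX haV hbV hbal
    have hE : H.E = ∅ := Finset.card_eq_zero.mp (Nat.le_zero.mp hcard)
    exact ⟨H, ⟨hOK, hVX, haV, hbV, acyclic_of_empty hE, hbal⟩, le_refl _⟩
  | succ N ih =>
    intro H a b hcard hOK hVX haV hbV hbal
    by_cases hacyc : H.undirected.IsAcyclic
    · exact ⟨H, ⟨hOK, hVX, haV, hbV, hacyc, hbal⟩, le_refl _⟩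
    unfold SimpleGraph.IsAcyclic at hacyc
    push_neg at hacyc
    obtain ⟨v₀, c, hc⟩ := hacyc
    have hnd : c.edges.Nodup := hc.isCircuit.isTrail.edges_nodup
    set s : Pt m × Pt m → ℝ := sgn H c with hs
    have htri : ∀ e ∈ H.E, s e = 0 ∨ s e = 1 ∨ s e = -1 := fun e _ => sgn_cases c hnd e
    -- there is an edge with s = ±1
    have hpm : ∃ e₁ ∈ H.E, s e₁ = 1 ∨ s e₁ = -1 := by
      cases c with
      | nil => exact absurd rfl hc.isCircuit.ne_nil
      | @cons _ d _ h p =>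
        refine ⟨(stepD H v₀ d).1, stepD_mem h, ?_⟩
        have := sgn_first h p hnd
        rw [hs, this]
        unfold stepD
        split <;> simp
    -- main claim: a good perturbation parameter
    have claim : ∃ t e₀, e₀ ∈ H.E ∧ H.w e₀ + t * s e₀ = 0 ∧
        (∀ e ∈ H.E, 0 ≤ H.w e + t * s e) ∧
        (∑ e ∈ H.E, (H.w e + t * s e) ^ α * dist e.1 e.2 ≤ WDG.cost α H) := by
      classical
      set Pp := H.E.filter (fun e => s e = 1) with hPp
      set Pm := H.E.filter (fun e => s e = -1) with hPm
      by_cases hPpne : Pp.Nonempty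
      · obtain ⟨ep, hep, hepmin⟩ := Pp.exists_min_image H.w hPpne
        have hepE : ep ∈ H.E := (Finset.mem_filter.mp hep).1
        have heps : s ep = 1 := (Finset.mem_filter.mp hep).2
        have hepw : 0 < H.w ep := (hOK ep hepE).2.2.2
        by_cases hPmne : Pm.Nonempty
        · -- mixed case: concavity
          obtain ⟨em, hem, hemmin⟩ := Pm.exists_min_image H.w hPmne
          have hemE : em ∈ H.E := (Finset.mem_filter.mp hem).1
          have hems : s em = -1 := (Finset.mem_filter.mp hem).2
          have hemw : 0 < H.w em := (hOK em hemE).2.2.2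
          set t₁ : ℝ := -H.w ep with ht₁
          set t₂ : ℝ := H.w em with ht₂
          have hpos1 : ∀ e ∈ H.E, 0 ≤ H.w e + t₁ * s e := by
            intro e he
            rcases htri e he with h0 | h1 | h2
            · rw [h0]; simpa using le_of_lt (hOK e he).2.2.2
            · have : H.w ep ≤ H.w e := hepmin e (Finset.mem_filter.mpr ⟨he, h1⟩)
              rw [h1, ht₁]; linarith
            · rw [h2, ht₁]
              have := (hOK e he).2.2.2
              nlinarith
          have hpos2 : ∀ e ∈ H.E, 0 ≤ H.w e + t₂ * s e := by
            intro e he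
            rcases htri e he with h0 | h1 | h2
            · rw [h0]; simpa using le_of_lt (hOK e he).2.2.2
            · rw [h1, ht₂]
              have := (hOK e he).2.2.2
              nlinarith
            · have : H.w em ≤ H.w e := hemmin e (Finset.mem_filter.mpr ⟨he, h2⟩)
              rw [h2, ht₂]; linarith
          set lam : ℝ := t₂ / (t₂ - t₁) with hlam
          set mu : ℝ := -t₁ / (t₂ - t₁) with hmu
          have hden : 0 < t₂ - t₁ := by rw [ht₁, ht₂]; linarith
          have hlam0 : 0 ≤ lam := div_nonneg (by rw [ht₂]; linarith) (le_of_lt hden)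
          have hmu0 : 0 ≤ mu := div_nonneg (by rw [ht₁]; linarith) (le_of_lt hden)
          have hsum1 : lam + mu = 1 := by
            rw [hlam, hmu]
            field_simp
            ring
          have hcomb : lam * t₁ + mu * t₂ = 0 := by
            rw [hlam, hmu]
            field_simp
            ring
          have hconcave : lam * (∑ e ∈ H.E, (H.w e + t₁ * s e) ^ α * dist e.1 e.2)
              + mu * (∑ e ∈ H.E, (H.w e + t₂ * s e) ^ α * dist e.1 e.2)
              ≤ WDG.cost α H := by
            unfold WDG.cost
            rw [Finset.mul_sum, Finset.mul_sum, ← Finset.sum_add_distrib]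
            apply Finset.sum_le_sum
            intro e he
            have key : lam * (H.w e + t₁ * s e) ^ α + mu * (H.w e + t₂ * s e) ^ α
                ≤ (H.w e) ^ α := by
              have hw : lam * (H.w e + t₁ * s e) + mu * (H.w e + t₂ * s e) = H.w e := by
                have : lam * (H.w e + t₁ * s e) + mu * (H.w e + t₂ * s e)
                    = (lam + mu) * H.w e + (lam * t₁ + mu * t₂) * s e := by ring
                rw [this, hsum1, hcomb]; ring
              calc lam * (H.w e + t₁ * s e) ^ α + mu * (H.w e + t₂ * s e) ^ α
                  ≤ (lam * (H.w e + t₁ * s e) + mu * (H.w e + t₂ * s e)) ^ α :=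
                    rpow_combo_ge hα0 hα1 (hpos1 e he) (hpos2 e he) hlam0 hmu0 hsum1
                _ = (H.w e) ^ α := by rw [hw]
            calc lam * ((H.w e + t₁ * s e) ^ α * dist e.1 e.2)
                  + mu * ((H.w e + t₂ * s e) ^ α * dist e.1 e.2)
                = (lam * (H.w e + t₁ * s e) ^ α + mu * (H.w e + t₂ * s e) ^ α)
                    * dist e.1 e.2 := by ring
              _ ≤ (H.w e) ^ α * dist e.1 e.2 :=
                  mul_le_mul_of_nonneg_right key dist_nonneg
          by_cases hwhich : (∑ e ∈ H.E, (H.w e + t₁ * s e) ^ α * dist e.1 e.2)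
              ≤ (∑ e ∈ H.E, (H.w e + t₂ * s e) ^ α * dist e.1 e.2)
          · refine ⟨t₁, ep, hepE, by rw [heps, ht₁]; ring, hpos1, ?_⟩
            have key1 : (lam + mu) * (∑ e ∈ H.E, (H.w e + t₁ * s e) ^ α * dist e.1 e.2)
                ≤ WDG.cost α H := by
              have h2 := mul_le_mul_of_nonneg_left hwhich hmu0
              nlinarith [hconcave]
            rw [hsum1, one_mul] at key1
            exact key1
          · push_neg at hwhich
            refine ⟨t₂, em, hemE, by rw [hems, ht₂]; ring, hpos2, ?_⟩
            have key1 : (lam + mu) * (∑ e ∈ H.E, (H.w e + t₂ * s e) ^ α * dist e.1 e.2)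
                ≤ WDG.cost α H := by
              have h2 := mul_le_mul_of_nonneg_left (le_of_lt hwhich) hlam0
              nlinarith [hconcave]
            rw [hsum1, one_mul] at key1
            exact key1
        · -- only + edges
          refine ⟨-H.w ep, ep, hepE, by rw [heps]; ring, ?_, ?_⟩
          · intro e he
            rcases htri e he with h0 | h1 | h2
            · rw [h0]; simpa using le_of_lt (hOK e he).2.2.2
            · have : H.w ep ≤ H.w e := hepmin e (Finset.mem_filter.mpr ⟨he, h1⟩)
              rw [h1]; linarith
            · exact absurd ⟨e, Finset.mem_filter.mpr ⟨he, h2⟩⟩ hPmne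
          · unfold WDG.cost
            apply Finset.sum_le_sum
            intro e he
            apply mul_le_mul_of_nonneg_right _ dist_nonneg
            rcases htri e he with h0 | h1 | h2
            · rw [h0]; simp
            · rw [h1]
              have h3 : H.w ep ≤ H.w e := hepmin e (Finset.mem_filter.mpr ⟨he, h1⟩)
              apply Real.rpow_le_rpow (by linarith) (by nlinarith) hα0
            · exact absurd ⟨e, Finset.mem_filter.mpr ⟨he, h2⟩⟩ hPmne
      · -- only - edges
        obtain ⟨e₁, he₁, hpm1⟩ := hpm
        have hPmne : Pm.Nonempty := by
          rcases hpm1 with h1 | h2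
          · exact absurd ⟨e₁, Finset.mem_filter.mpr ⟨he₁, h1⟩⟩ hPpne
          · exact ⟨e₁, Finset.mem_filter.mpr ⟨he₁, h2⟩⟩
        obtain ⟨em, hem, hemmin⟩ := Pm.exists_min_image H.w hPmne
        have hemE : em ∈ H.E := (Finset.mem_filter.mp hem).1
        have hems : s em = -1 := (Finset.mem_filter.mp hem).2
        refine ⟨H.w em, em, hemE, by rw [hems]; ring, ?_, ?_⟩
        · intro e he
          rcases htri e he with h0 | h1 | h2
          · rw [h0]; simpa using le_of_lt (hOK e he).2.2.2
          · exact absurd ⟨e, Finset.mem_filter.mpr ⟨he, h1⟩⟩ hPpne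
          · have : H.w em ≤ H.w e := hemmin e (Finset.mem_filter.mpr ⟨he, h2⟩)
            rw [h2]; linarith
        · unfold WDG.cost
          apply Finset.sum_le_sum
          intro e he
          apply mul_le_mul_of_nonneg_right _ dist_nonneg
          rcases htri e he with h0 | h1 | h2
          · rw [h0]; simp
          · exact absurd ⟨e, Finset.mem_filter.mpr ⟨he, h1⟩⟩ hPpne
          · rw [h2]
            have h3 : H.w em ≤ H.w e := hemmin e (Finset.mem_filter.mpr ⟨he, h2⟩)
            have := (hOK em hemE).2.2.2
            apply Real.rpow_le_rpow (by nlinarith) (by nlinarith) hα0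
    obtain ⟨t, e₀, he₀E, hz, hpos, hcost⟩ := claim
    set H₂ := wmod H s t with hH₂
    have hbal₂ : ∀ v, H₂.outflow v - H₂.inflow v = a v - b v := by
      intro v
      rw [hH₂, wmod_outflow_sub_inflow, sgn_flux c v]
      rw [hbal v]
      ring
    have hcard₂ : H₂.E.card ≤ N := by
      have hsub : H₂.E ⊆ H.E.erase e₀ := by
        intro e he
        rw [hH₂, wmod, Finset.mem_filter] at he
        rw [Finset.mem_erase]
        refine ⟨?_, he.1⟩
        rintro rfl
        exact he.2 hz
      have h1 : H₂.E.card ≤ (H.E.erase e₀).card := Finset.card_le_card hsub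
      rw [Finset.card_erase_of_mem he₀E] at h1
      omega
    obtain ⟨H', hH'TP, hH'cost⟩ := ih H₂ a b hcard₂ (wmod_edgesOK hOK hpos) hVX haV hbV hbal₂
    refine ⟨H', hH'TP, le_trans hH'cost ?_⟩
    calc WDG.cost α H₂ ≤ ∑ e ∈ H.E.erase e₀, (H.w e + t * s e) ^ α * dist e.1 e.2 :=
          wmod_cost_le_erase hpos he₀E hz
      _ ≤ ∑ e ∈ H.E, (H.w e + t * s e) ^ α * dist e.1 e.2 := sum_erase_le_sum hpos e₀
      _ ≤ WDG.cost α H := hcost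

/-! ### directed chains: an acyclic antiparallel-free graph has no directed cycles -/

def buildWalk (Gr : SimpleGraph (Pt m)) (z : ℕ → Pt m) :
    (t : ℕ) → (∀ i, i < t → Gr.Adj (z i) (z (i+1))) → Gr.Walk (z 0) (z t)
  | 0, _ => SimpleGraph.Walk.nil
  | (t+1), h => (buildWalk Gr z t (fun i hi => h i (Nat.lt_succ_of_lt hi))).append
      (h t (Nat.lt_succ_self t)).toWalk

lemma buildWalk_support (Gr : SimpleGraph (Pt m)) (z : ℕ → Pt m) :
    ∀ (t : ℕ) (h : ∀ i, i < t → Gr.Adj (z i) (z (i+1))),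
    (buildWalk Gr z t h).support = (List.range (t+1)).map z := by
  intro t
  induction t with
  | zero =>
    intro h
    show [z 0] = List.map z (List.range 1)
    rw [List.range_succ]
    simp
  | succ t ih =>
    intro h
    rw [buildWalk, SimpleGraph.Walk.support_append, ih]
    rw [List.range_succ (n := t+1), List.map_append]
    simp [SimpleGraph.Adj.toWalk]

lemma buildWalk_length (Gr : SimpleGraph (Pt m)) (z : ℕ → Pt m) :
    ∀ (t : ℕ) (h : ∀ i, i < t → Gr.Adj (z i) (z (i+1))),
    (buildWalk Gr z t h).length = t := by
  intro t
  induction t with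
  | zero => intro h; simp [buildWalk]
  | succ t ih =>
    intro h
    rw [buildWalk, SimpleGraph.Walk.length_append, ih]
    simp [SimpleGraph.Adj.toWalk]

lemma no_closed_chain {G : WDG m} (hOK : G.edgesOK) (hacyc : G.undirected.IsAcyclic)
    (hAP : ∀ u v, (u,v) ∈ G.E → (v,u) ∈ G.E → False) :
    ∀ (q : ℕ), 1 ≤ q → ∀ z : ℕ → Pt m,
      (∀ i, i < q → (z i, z (i+1)) ∈ G.E) → z q = z 0 → False := by
  intro q
  induction q using Nat.strong_induction_on with
  | _ q ih =>
  intro hq z hchain hclosed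
  match q, hq, hchain, hclosed, ih with
  | 1, _, hchain, hclosed, _ =>
    have h0 := hchain 0 (by norm_num)
    have := (hOK _ h0).2.2.1
    simp only at this
    rw [hclosed] at h0
    exact this (by rw [hclosed])
  | 2, _, hchain, hclosed, _ =>
    have h0 := hchain 0 (by norm_num)
    have h1 := hchain 1 (by norm_num)
    rw [hclosed] at h1
    exact hAP _ _ h0 h1
  | (q'+3), _, hchain, hclosed, ih =>
    set q := q' + 3 with hqdef
    by_cases hdup : ∃ i j, i < j ∧ j < q ∧ z i = z j
    · obtain ⟨i, j, hij, hjq, heq⟩ := hdup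
      refine ih (j - i) (by omega) (by omega) (fun t => z (i + t)) ?_ ?_
      · intro t ht
        have := hchain (i + t) (by omega)
        have harg : i + t + 1 = i + (t + 1) := by omega
        rwa [harg] at this
      · have harg : i + (j - i) = j := by omega
        show z (i + (j - i)) = z (i + 0)
        rw [harg, Nat.add_zero, ← heq]
    · push_neg at hdup
      have hinj : ∀ i j, i < q → j < q → z i = z j → i = j := by
        intro i j hi hj hzz
        rcases lt_trichotomy i j with h | h | h
        · exact absurd hzz (hdup i j h hj)
        · exact h
        · exact absurd hzz.symm (hdup j i h hi)
      have hadj : ∀ i, i < q - 1 → G.undirected.Adj (z i) (z (i+1)) := by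
        intro i hi
        have he := hchain i (by omega)
        exact undirected_adj.mpr ⟨(hOK _ he).2.2.1, Or.inl he⟩
      set W := buildWalk G.undirected z (q-1) hadj with hW
      have hWpath : W.IsPath := by
        rw [SimpleGraph.Walk.isPath_def, hW, buildWalk_support]
        apply List.Nodup.map_on
        · intro i hi j hj hzz
          rw [List.mem_range] at hi hj
          exact hinj i j (by omega) (by omega) hzz
        · exact List.nodup_range
      have hlast : G.undirected.Adj (z 0) (z (q-1)) := by
        have he := hchain (q-1) (by omega)
        have harg : q - 1 + 1 = q := by omega
        rw [harg, hclosed] at he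
        have hne : z (q-1) ≠ z 0 := by
          intro hzz
          have := hinj (q-1) 0 (by omega) (by omega) hzz
          omega
        exact (undirected_adj.mpr ⟨hne, Or.inl he⟩).symm
      have hWq : q - 1 = q' + 2 := by omega
      have heqpath := hacyc.path_unique ⟨W, hWpath⟩ (SimpleGraph.Path.singleton hlast)
      have hval : W = (SimpleGraph.Path.singleton hlast : G.undirected.Walk (z 0) (z (q-1))) :=
        congrArg Subtype.val heqpath
      have h1 : W.length = 1 := by
        rw [hval]
        simp [SimpleGraph.Path.singleton, SimpleGraph.Adj.toWalk]
      have h2 : W.length = q - 1 := buildWalk_length _ _ _ _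
      omega

lemma chain_of_transGen {r : Pt m → Pt m → Prop} {a b : Pt m} (h : Relation.TransGen r a b) :
    ∃ (q : ℕ) (z : ℕ → Pt m), 1 ≤ q ∧ z 0 = a ∧ z q = b ∧ ∀ i, i < q → r (z i) (z (i+1)) := by
  induction h with
  | @single bb hr =>
    refine ⟨1, fun t => if t = 0 then a else bb, le_refl 1, by simp, by simp, ?_⟩
    intro i hi
    interval_cases i
    simpa using hr
  | @tail bb cc h₁ h₂ ih =>
    obtain ⟨q, z, hq, h0, hqb, hch⟩ := ih
    refine ⟨q + 1, fun t => if t ≤ q then z t else cc, by omega, by simp [h0], by simp, ?_⟩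
    intro i hi
    by_cases hiq : i < q
    · have e1 : (if i ≤ q then z i else cc) = z i := if_pos (by omega)
      have e2 : (if i + 1 ≤ q then z (i+1) else cc) = z (i+1) := if_pos (by omega)
      simp only [e1, e2]
      exact hch i hiq
    · have hieq : i = q := by omega
      subst hieq
      have e2 : ¬ (i + 1 ≤ i) := by omega
      show r (if i ≤ i then z i else cc) (if i + 1 ≤ i then z (i+1) else cc)
      rw [if_pos (le_refl i), if_neg e2, hqb]
      exact h₂

lemma ndc {G : WDG m} (hOK : G.edgesOK) (hacyc : G.undirected.IsAcyclic)
    (hAP : ∀ u v, (u,v) ∈ G.E → (v,u) ∈ G.E → False) (c : Pt m) :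
    ¬ Relation.TransGen (fun u v => (u, v) ∈ G.E) c c := by
  intro h
  obtain ⟨q, z, hq, h0, hqc, hch⟩ := chain_of_transGen h
  exact no_closed_chain hOK hacyc hAP q hq z hch (by rw [hqc, h0])

/-- In an acyclic antiparallel-free balanced graph, upstream of any vertex with positive
outflow or supply there is a supply vertex with zero inflow. -/
lemma exists_source {G : WDG m} {a b : Pt m →₀ ℝ} (hOK : G.edgesOK)
    (hacyc : G.undirected.IsAcyclic) (hAP : ∀ u v, (u,v) ∈ G.E → (v,u) ∈ G.E → False)
    (hbal : ∀ v, G.outflow v - G.inflow v = a v - b v) (hb : ∀ v, 0 ≤ b v) :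
    ∀ (N : ℕ) (c : Pt m), c ∈ G.V →
    (G.V.filter (fun u => Relation.ReflTransGen (fun u v => (u,v) ∈ G.E) u c)).card ≤ N →
    (0 < G.outflow c ∨ 0 < a c) →
    ∃ zz, zz ∈ G.V ∧ 0 < a zz ∧ G.inflow zz = 0 ∧ G.undirected.Reachable zz c := by
  set r : Pt m → Pt m → Prop := fun u v => (u, v) ∈ G.E with hr
  intro N
  induction N with
  | zero =>
    intro c hcV hcard _
    exfalso
    have : c ∈ G.V.filter (fun u => Relation.ReflTransGen r u c) :=
      Finset.mem_filter.mpr ⟨hcV, Relation.ReflTransGen.refl⟩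
    have := Finset.card_pos.mpr ⟨c, this⟩
    omega
  | succ N ih =>
    intro c hcV hcard hpos
    by_cases hin : G.inflow c = 0
    · refine ⟨c, hcV, ?_, hin, SimpleGraph.Reachable.refl c⟩
      rcases hpos with hpos | hpos
      · have := hbal c
        rw [hin, sub_zero] at this
        have := hb c
        linarith
      · exact hpos
    · have hne : (G.E.filter (fun e => e.2 = c)).Nonempty := by
        rw [Finset.nonempty_iff_ne_empty]
        intro hemp
        exact hin (by unfold WDG.inflow; rw [hemp, Finset.sum_empty])
      obtain ⟨e, he⟩ := hne
      have heE : e ∈ G.E := (Finset.mem_filter.mp he).1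
      have he2 : e.2 = c := (Finset.mem_filter.mp he).2
      have huV : e.1 ∈ G.V := (hOK e heE).1
      have hout : 0 < G.outflow e.1 := by
        have hmem : e ∈ G.E.filter (fun e' => e'.1 = e.1) := Finset.mem_filter.mpr ⟨heE, rfl⟩
        have hle : G.w e ≤ G.outflow e.1 :=
          Finset.single_le_sum (fun f hf => le_of_lt (hOK f (Finset.mem_filter.mp hf).1).2.2.2) hmem
        linarith [(hOK e heE).2.2.2]
      have hruc : r e.1 c := by
        show (e.1, c) ∈ G.E
        have heq : (e.1, c) = e := by
          rw [← he2]
        rw [heq]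
        exact heE
      have hsub : G.V.filter (fun u => Relation.ReflTransGen r u e.1)
          ⊆ G.V.filter (fun u => Relation.ReflTransGen r u c) := by
        intro v hv
        rw [Finset.mem_filter] at hv ⊢
        exact ⟨hv.1, hv.2.tail hruc⟩
      have hcnotin : c ∉ G.V.filter (fun u => Relation.ReflTransGen r u e.1) := by
        intro hcin
        have hrt : Relation.ReflTransGen r c e.1 := (Finset.mem_filter.mp hcin).2
        exact ndc hOK hacyc hAP c (Relation.TransGen.tail' hrt hruc)
      have hss : G.V.filter (fun u => Relation.ReflTransGen r u e.1)
          ⊂ G.V.filter (fun u => Relation.ReflTransGen r u c) := by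
        rw [Finset.ssubset_iff_of_subset hsub]
        exact ⟨c, Finset.mem_filter.mpr ⟨hcV, Relation.ReflTransGen.refl⟩, hcnotin⟩
      have hcard' : (G.V.filter (fun u => Relation.ReflTransGen r u e.1)).card ≤ N := by
        have := Finset.card_lt_card hss
        omega
      obtain ⟨zz, hzzV, hzza, hzzin, hzzreach⟩ := ih e.1 huV hcard' (Or.inl hout)
      refine ⟨zz, hzzV, hzza, hzzin, hzzreach.trans ?_⟩
      have hadj := adj_of_mem hOK heE
      rw [he2] at hadj
      exact hadj.reachable

/-! ### components -/

def comp (G : WDG m) (r : Pt m) : Finset (Pt m) :=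
  G.V.filter (fun v => G.undirected.Reachable v r)

def compE (G : WDG m) (r : Pt m) : Finset (Pt m × Pt m) :=
  G.E.filter (fun e => G.undirected.Reachable e.1 r)

lemma mem_comp {G : WDG m} {r v : Pt m} :
    v ∈ comp G r ↔ v ∈ G.V ∧ G.undirected.Reachable v r := Finset.mem_filter

lemma mem_compE {G : WDG m} {r : Pt m} {e : Pt m × Pt m} :
    e ∈ compE G r ↔ e ∈ G.E ∧ G.undirected.Reachable e.1 r := Finset.mem_filter

lemma compE_snd {G : WDG m} (hOK : G.edgesOK) {r : Pt m} {e : Pt m × Pt m}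
    (he : e ∈ compE G r) : G.undirected.Reachable e.2 r := by
  rw [mem_compE] at he
  exact ((adj_of_mem hOK he.1).symm.reachable).trans he.2

lemma sum_out_comp (G : WDG m) (S : Finset (Pt m)) :
    ∑ v ∈ S, G.outflow v = ∑ e ∈ G.E, if e.1 ∈ S then G.w e else 0 := by
  unfold WDG.outflow
  have h1 : ∀ v, (∑ e ∈ G.E.filter (fun e => e.1 = v), G.w e)
      = ∑ e ∈ G.E, if e.1 = v then G.w e else 0 := by
    intro v
    rw [Finset.sum_filter]
  simp_rw [h1]
  rw [Finset.sum_comm]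
  apply Finset.sum_congr rfl
  intro e _
  rw [Finset.sum_ite_eq S e.1 (fun _ => G.w e)]

lemma sum_in_comp (G : WDG m) (S : Finset (Pt m)) :
    ∑ v ∈ S, G.inflow v = ∑ e ∈ G.E, if e.2 ∈ S then G.w e else 0 := by
  unfold WDG.inflow
  have h1 : ∀ v, (∑ e ∈ G.E.filter (fun e => e.2 = v), G.w e)
      = ∑ e ∈ G.E, if e.2 = v then G.w e else 0 := by
    intro v
    rw [Finset.sum_filter]
  simp_rw [h1]
  rw [Finset.sum_comm]
  apply Finset.sum_congr rfl
  intro e _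
  rw [Finset.sum_ite_eq S e.2 (fun _ => G.w e)]

lemma edge_flux_comp {G : WDG m} (hOK : G.edgesOK) (r : Pt m) :
    ∑ v ∈ comp G r, (G.outflow v - G.inflow v) = 0 := by
  rw [Finset.sum_sub_distrib, sum_out_comp, sum_in_comp]
  rw [← Finset.sum_sub_distrib]
  apply Finset.sum_eq_zero
  intro e he
  have hiff : e.1 ∈ comp G r ↔ e.2 ∈ comp G r := by
    have hadj := adj_of_mem hOK he
    rw [mem_comp, mem_comp]
    constructor
    · rintro ⟨_, h2⟩
      exact ⟨(hOK e he).2.1, hadj.symm.reachable.trans h2⟩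
    · rintro ⟨_, h2⟩
      exact ⟨(hOK e he).1, hadj.reachable.trans h2⟩
  by_cases h1 : e.1 ∈ comp G r
  · rw [if_pos h1, if_pos (hiff.mp h1), sub_self]
  · rw [if_neg h1, if_neg (fun h => h1 (hiff.mpr h)), sub_self]

lemma comp_mass {G : WDG m} {a b : Pt m →₀ ℝ} (hOK : G.edgesOK)
    (hbal : ∀ v, G.outflow v - G.inflow v = a v - b v) (r : Pt m) :
    ∑ v ∈ comp G r, a v = ∑ v ∈ comp G r, b v := by
  have h := edge_flux_comp hOK r
  rw [Finset.sum_congr rfl (fun v _ => hbal v)] at h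
  rw [Finset.sum_sub_distrib] at h
  linarith

/-! ### atomic measure lemmas -/

lemma bMeas_apply {ℓ : ℕ} (y : Fin ℓ → Pt m) (n : Fin ℓ → ℝ) (v : Pt m) :
    bMeas y n v = ∑ j, if y j = v then n j else 0 := by
  unfold bMeas
  rw [Finsupp.finset_sum_apply]
  exact Finset.sum_congr rfl (fun j _ => Finsupp.single_apply)

lemma bMeas_nonneg {ℓ : ℕ} {y : Fin ℓ → Pt m} {n : Fin ℓ → ℝ} (hn : ∀ j, 0 < n j)
    (v : Pt m) : 0 ≤ bMeas y n v := by
  rw [bMeas_apply]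
  apply Finset.sum_nonneg
  intro j _
  by_cases h : y j = v
  · rw [if_pos h]; exact le_of_lt (hn j)
  · rw [if_neg h]

lemma bMeas_atom {ℓ : ℕ} {y : Fin ℓ → Pt m} {n : Fin ℓ → ℝ} (hyinj : Function.Injective y)
    (j : Fin ℓ) : bMeas y n (y j) = n j := by
  rw [bMeas_apply]
  rw [Finset.sum_eq_single_of_mem j (Finset.mem_univ j)]
  · rw [if_pos rfl]
  · intro j' _ hne
    rw [if_neg (fun h => hne (hyinj h))]

lemma bMeas_support {ℓ : ℕ} {y : Fin ℓ → Pt m} {n : Fin ℓ → ℝ} {v : Pt m}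
    (h : bMeas y n v ≠ 0) : ∃ j, y j = v := by
  by_contra hno
  push_neg at hno
  apply h
  rw [bMeas_apply]
  apply Finset.sum_eq_zero
  intro j _
  rw [if_neg (hno j)]

lemma massOf_add (f g : Pt m →₀ ℝ) : massOf (f + g) = massOf f + massOf g := by
  unfold massOf
  apply Finsupp.sum_add_index'
  · intro a; rfl
  · intro a b₁ b₂; rfl

lemma massOf_single (p : Pt m) (t : ℝ) : massOf (Finsupp.single p t) = t := by
  unfold massOf
  exact Finsupp.sum_single_index rfl

/-! ### the basic perturbation construction -/

lemma exists_pm_edge {G : WDG m} {u v : Pt m} (W : G.undirected.Walk u v)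
    (hnd : W.edges.Nodup) (hne : u ≠ v) :
    ∃ e₁ ∈ G.E, sgn G W e₁ = 1 ∨ sgn G W e₁ = -1 := by
  cases W with
  | nil => exact absurd rfl hne
  | @cons _ d _ h p =>
    refine ⟨(stepD G u d).1, stepD_mem h, ?_⟩
    rw [sgn_first h p hnd]
    unfold stepD
    split <;> simp

lemma wmod_cost_le {α : ℝ} {G : WDG m} {s : Pt m × Pt m → ℝ} {t : ℝ}
    (hpos : ∀ e ∈ G.E, 0 ≤ G.w e + t * s e) :
    WDG.cost α (wmod G s t) ≤ ∑ e ∈ G.E, (G.w e + t * s e) ^ α * dist e.1 e.2 := by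
  apply Finset.sum_le_sum_of_subset_of_nonneg (Finset.filter_subset _ _)
  intro e he _
  exact mul_nonneg (Real.rpow_nonneg (hpos e he) _) dist_nonneg

lemma perturb_alloc {k ℓ : ℕ} {X : Set (Pt m)} {x : Fin k → Pt m} {y : Fin ℓ → Pt m}
    {n : Fin ℓ → ℝ} {G : WDG m} {a₀ : Pt m →₀ ℝ}
    (hTP : IsTransportPath X G a₀ (bMeas y n))
    (haX : ↑a₀.support ⊆ Set.range x) (hmass : massOf a₀ = 1)
    {p q : Pt m} (hp : p ∈ Set.range x) (hq : q ∈ Set.range x) (hpq : p ≠ q)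
    (hpV : p ∈ G.V) (hqV : q ∈ G.V)
    (W : G.undirected.Walk p q) (t : ℝ)
    (hposall : ∀ e ∈ G.E, 0 ≤ G.w e + t * sgn G W e)
    (ha₀' : ∀ z, z = p ∨ z = q ∨ 0 ≤ a₀ z)
    (hap : 0 ≤ a₀ p + t) (haq : 0 ≤ a₀ q - t) :
    IsAllocPath X x y n (wmod G (sgn G W) t) := by
  obtain ⟨hOK, hVX, haV, hbV, hacyc, hbal⟩ := hTP
  set a' : Pt m →₀ ℝ := a₀ + Finsupp.single p t + Finsupp.single q (-t) with ha'
  have ha'app : ∀ v, a' v = a₀ v + (if p = v then t else 0) + (if q = v then -t else 0) := by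
    intro v
    rw [ha']
    rw [Finsupp.add_apply, Finsupp.add_apply, Finsupp.single_apply, Finsupp.single_apply]
  have hsupp : ∀ z, a' z ≠ 0 → z = p ∨ z = q ∨ (a₀ z ≠ 0) := by
    intro z hz
    by_cases h1 : z = p
    · exact Or.inl h1
    by_cases h2 : z = q
    · exact Or.inr (Or.inl h2)
    right; right
    intro h0
    apply hz
    rw [ha'app, h0, if_neg (fun h => h1 h.symm), if_neg (fun h => h2 h.symm)]
    ring
  refine ⟨a', ?_, ?_, ?_, ?_⟩
  · intro z
    rw [ha'app]
    by_cases h1 : p = z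
    · rw [if_pos h1, if_neg (fun h2 => hpq (h1.trans h2.symm))]
      rw [← h1]
      linarith
    · rw [if_neg h1]
      by_cases h2 : q = z
      · rw [if_pos h2, ← h2]
        linarith
      · rw [if_neg h2]
        rcases ha₀' z with h | h | h
        · exact absurd h.symm h1
        · exact absurd h.symm h2
        · linarith
  · intro z hz
    rw [Finset.mem_coe, Finsupp.mem_support_iff] at hz
    rcases hsupp z hz with h | h | h
    · rw [h]; exact hp
    · rw [h]; exact hq
    · exact haX (by rw [Finset.mem_coe, Finsupp.mem_support_iff]; exact h)
  · rw [ha', massOf_add, massOf_add, massOf_single, massOf_single, hmass]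
    ring
  · refine ⟨wmod_edgesOK hOK hposall, hVX, ?_, hbV, ?_, ?_⟩
    · intro z hz
      rw [Finsupp.mem_support_iff] at hz
      rcases hsupp z hz with h | h | h
      · rw [h]; exact hpV
      · rw [h]; exact hqV
      · exact haV z (Finsupp.mem_support_iff.mpr h)
    · exact acyclic_of_le (undirected_mono (wmod_E_subset _ _ _)) hacyc
    · intro v
      rw [wmod_outflow_sub_inflow, sgn_flux W v, hbal v, ha'app v]
      by_cases h1 : p = v <;> by_cases h2 : q = v <;> simp [h1, h2] <;> ring

/-! ### consequences of optimality -/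

lemma sum_indicator_filter (G : WDG m) {e₀ : Pt m × Pt m} (he₀ : e₀ ∈ G.E)
    (P : Pt m × Pt m → Prop) [DecidablePred P] :
    (∑ e ∈ G.E.filter P, if e = e₀ then (1:ℝ) else 0) = if P e₀ then 1 else 0 := by
  rw [Finset.sum_ite_eq' (G.E.filter P) e₀ (fun _ => (1:ℝ))]
  by_cases h : P e₀
  · rw [if_pos (Finset.mem_filter.mpr ⟨he₀, h⟩), if_pos h]
  · rw [if_neg (fun hm => h (Finset.mem_filter.mp hm).2), if_neg h]

lemma ap_free {k ℓ : ℕ} {X : Set (Pt m)} {x : Fin k → Pt m} {y : Fin ℓ → Pt m}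
    {n : Fin ℓ → ℝ} {G : WDG m} {a₀ : Pt m →₀ ℝ}
    (hTP : IsTransportPath X G a₀ (bMeas y n))
    (ha₀ : ∀ z, 0 ≤ a₀ z) (haX : ↑a₀.support ⊆ Set.range x) (hmass : massOf a₀ = 1)
    (hopt : ∀ G', IsAllocPath X x y n G' → WDG.cost 0 G ≤ WDG.cost 0 G') :
    ∀ u v : Pt m, (u,v) ∈ G.E → (v,u) ∈ G.E → False := by
  obtain ⟨hOK, hVX, haV, hbV, hacyc, hbal⟩ := hTP
  have main : ∀ u v : Pt m, (u,v) ∈ G.E → (v,u) ∈ G.E →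
      G.w (v,u) ≤ G.w (u,v) → False := by
    intro u v huv hvu hle
    have hne_uv : u ≠ v := (hOK _ huv).2.2.1
    have hpair_ne : ((v,u) : Pt m × Pt m) ≠ (u,v) := fun h => hne_uv (congrArg Prod.snd h)
    set s : Pt m × Pt m → ℝ :=
      fun e => (if e = (u,v) then 1 else 0) + (if e = (v,u) then 1 else 0) with hs
    set t : ℝ := -G.w (v,u) with ht
    have hsuv : s (u,v) = 1 := by rw [hs]; simp [hpair_ne.symm]
    have hsvu : s (v,u) = 1 := by rw [hs]; simp [hpair_ne]
    have hpos : ∀ e ∈ G.E, 0 ≤ G.w e + t * s e := by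
      intro e he
      by_cases h1 : e = (u,v)
      · rw [h1, hsuv, ht]; simp; linarith
      · by_cases h2 : e = (v,u)
        · rw [h2, hsvu, ht]; simp
        · have : s e = 0 := by rw [hs]; simp [h1, h2]
          rw [this, mul_zero, add_zero]
          exact le_of_lt (hOK e he).2.2.2
    have hflux : ∀ z : Pt m,
        (∑ e ∈ G.E.filter (fun e => e.1 = z), s e)
          - (∑ e ∈ G.E.filter (fun e => e.2 = z), s e) = 0 := by
      intro z
      have hout : (∑ e ∈ G.E.filter (fun e => e.1 = z), s e)
          = (if u = z then (1:ℝ) else 0) + (if v = z then 1 else 0) := by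
        rw [hs]
        rw [Finset.sum_add_distrib, sum_indicator_filter G huv, sum_indicator_filter G hvu]
      have hin : (∑ e ∈ G.E.filter (fun e => e.2 = z), s e)
          = (if v = z then (1:ℝ) else 0) + (if u = z then 1 else 0) := by
        rw [hs]
        rw [Finset.sum_add_distrib, sum_indicator_filter G huv, sum_indicator_filter G hvu]
      rw [hout, hin]; ring
    have hTP2 : IsTransportPath X (wmod G s t) a₀ (bMeas y n) := by
      refine ⟨wmod_edgesOK hOK hpos, hVX, haV, hbV,
        acyclic_of_le (undirected_mono (wmod_E_subset _ _ _)) hacyc, ?_⟩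
      intro z
      rw [wmod_outflow_sub_inflow, hflux z, hbal z]
      ring
    have halloc : IsAllocPath X x y n (wmod G s t) := ⟨a₀, ha₀, haX, hmass, hTP2⟩
    have hcmp := hopt _ halloc
    have hzero : G.w (v,u) + t * s (v,u) = 0 := by rw [hsvu, ht]; ring
    have hbound := wmod_cost_le_erase (α := 0) hpos hvu hzero
    have hc1 : ∑ e ∈ G.E.erase (v,u), (G.w e + t * s e) ^ (0:ℝ) * dist e.1 e.2
        = ∑ e ∈ G.E.erase (v,u), dist e.1 e.2 :=
      Finset.sum_congr rfl (fun e _ => by rw [Real.rpow_zero, one_mul])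
    have hc2 : WDG.cost 0 G = ∑ e ∈ G.E, dist e.1 e.2 := by
      unfold WDG.cost
      exact Finset.sum_congr rfl (fun e _ => by rw [Real.rpow_zero, one_mul])
    have hc3 := Finset.sum_erase_add G.E (fun e => dist e.1 e.2) hvu
    have hd0 : (0:ℝ) < dist (v,u).1 (v,u).2 := dist_pos.mpr (hOK _ hvu).2.2.1
    rw [hc1] at hbound
    rw [hc2] at hcmp
    simp only at hc3 hd0
    linarith
  intro u v huv hvu
  rcases le_total (G.w (v,u)) (G.w (u,v)) with h | h
  · exact main u v huv hvu h
  · exact main v u hvu huv h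

lemma first_out_edge {G : WDG m} (hOK : G.edgesOK) {u v : Pt m} (W : G.undirected.Walk u v)
    (hnd : W.edges.Nodup) (hne : u ≠ v) (hin : G.inflow u = 0) :
    ∃ e₁ ∈ G.E, e₁.1 = u ∧ sgn G W e₁ = 1 ∧ G.w e₁ ≤ G.outflow u := by
  cases W with
  | nil => exact absurd rfl hne
  | @cons _ d _ h p =>
    have hd : (u, d) ∈ G.E := by
      rcases (undirected_adj.mp h).2 with h1 | h1
      · exact h1
      · exfalso
        have hmem : (d,u) ∈ G.E.filter (fun e => e.2 = u) := Finset.mem_filter.mpr ⟨h1, rfl⟩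
        have hle : G.w (d,u) ≤ G.inflow u :=
          Finset.single_le_sum
            (fun f hf => le_of_lt (hOK f (Finset.mem_filter.mp hf).1).2.2.2) hmem
        have := (hOK _ h1).2.2.2
        rw [hin] at hle
        linarith
    have hstep : stepD G u d = ((u,d), 1) := by unfold stepD; rw [if_pos hd]
    refine ⟨(u,d), hd, rfl, ?_, ?_⟩
    · have hsf := sgn_first h p hnd
      rw [hstep] at hsf
      exact hsf
    · show G.w (u,d) ≤ ∑ f ∈ G.E.filter (fun f => f.1 = u), G.w f
      exact Finset.single_le_sum (f := G.w)
        (fun f hf => le_of_lt (hOK f (Finset.mem_filter.mp hf).1).2.2.2)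
        (Finset.mem_filter.mpr ⟨hd, rfl⟩)

lemma comp_has_demand {k ℓ : ℕ} {X : Set (Pt m)} {α : ℝ} {x : Fin k → Pt m}
    {y : Fin ℓ → Pt m} {n : Fin ℓ → ℝ} {G : WDG m} {a₀ : Pt m →₀ ℝ}
    (hTP : IsTransportPath X G a₀ (bMeas y n))
    (ha₀ : ∀ z, 0 ≤ a₀ z) (haX : ↑a₀.support ⊆ Set.range x) (hmass : massOf a₀ = 1)
    (hopt : ∀ G', IsAllocPath X x y n G' → WDG.cost α G ≤ WDG.cost α G') :
    ∀ e ∈ G.E, ∃ j : Fin ℓ, G.undirected.Reachable (y j) e.1 := by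
  obtain ⟨hOK, hVX, haV, hbV, hacyc, hbal⟩ := hTP
  intro e he
  by_contra hno
  push_neg at hno
  have hbC : ∀ v ∈ comp G e.1, bMeas y n v = 0 := by
    intro v hv
    by_contra hbv
    obtain ⟨j, hj⟩ := bMeas_support hbv
    apply hno j
    rw [hj]
    exact (mem_comp.mp hv).2
  have hsum : ∑ v ∈ comp G e.1, a₀ v = 0 := by
    rw [comp_mass hOK hbal e.1]
    exact Finset.sum_eq_zero hbC
  have haC : ∀ v ∈ comp G e.1, a₀ v = 0 := by
    intro v hv
    exact (Finset.sum_eq_zero_iff_of_nonneg (fun u _ => ha₀ u)).mp hsum v hv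
  set G₂ : WDG m := ⟨G.V, G.E \ compE G e.1, G.w⟩ with hG₂
  have hE₂ : G₂.E ⊆ G.E := Finset.sdiff_subset
  have hbalv : ∀ v, G₂.outflow v - G₂.inflow v = a₀ v - bMeas y n v := by
    intro v
    by_cases hv : v ∈ comp G e.1
    · have hemp1 : G₂.E.filter (fun f => f.1 = v) = ∅ := by
        apply Finset.eq_empty_iff_forall_notMem.mpr
        intro f hf
        rw [Finset.mem_filter, Finset.mem_sdiff] at hf
        apply hf.1.2
        rw [mem_compE]
        refine ⟨hf.1.1, ?_⟩
        rw [hf.2]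
        exact (mem_comp.mp hv).2
      have hemp2 : G₂.E.filter (fun f => f.2 = v) = ∅ := by
        apply Finset.eq_empty_iff_forall_notMem.mpr
        intro f hf
        rw [Finset.mem_filter, Finset.mem_sdiff] at hf
        apply hf.1.2
        rw [mem_compE]
        refine ⟨hf.1.1, ?_⟩
        have hadj := adj_of_mem hOK hf.1.1
        rw [hf.2] at hadj
        exact hadj.reachable.trans (mem_comp.mp hv).2
      have hout : G₂.outflow v = 0 := by
        show ∑ f ∈ G₂.E.filter (fun f => f.1 = v), G₂.w f = 0
        rw [hemp1, Finset.sum_empty]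
      have hin : G₂.inflow v = 0 := by
        show ∑ f ∈ G₂.E.filter (fun f => f.2 = v), G₂.w f = 0
        rw [hemp2, Finset.sum_empty]
      rw [hout, hin, haC v hv, hbC v hv]
    · have hout : G₂.outflow v = G.outflow v := by
        unfold WDG.outflow
        congr 1
        apply Finset.ext
        intro f
        rw [Finset.mem_filter, Finset.mem_filter, Finset.mem_sdiff]
        constructor
        · rintro ⟨⟨h1, _⟩, h2⟩; exact ⟨h1, h2⟩
        · rintro ⟨h1, h2⟩
          refine ⟨⟨h1, ?_⟩, h2⟩
          intro hf
          apply hv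
          rw [mem_comp]
          exact ⟨h2 ▸ (hOK f h1).1, h2 ▸ (mem_compE.mp hf).2⟩
      have hin : G₂.inflow v = G.inflow v := by
        unfold WDG.inflow
        congr 1
        apply Finset.ext
        intro f
        rw [Finset.mem_filter, Finset.mem_filter, Finset.mem_sdiff]
        constructor
        · rintro ⟨⟨h1, _⟩, h2⟩; exact ⟨h1, h2⟩
        · rintro ⟨h1, h2⟩
          refine ⟨⟨h1, ?_⟩, h2⟩
          intro hf
          apply hv
          rw [mem_comp]
          exact ⟨h2 ▸ (hOK f h1).2.1, h2 ▸ compE_snd hOK hf⟩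
      rw [hout, hin]
      exact hbal v
  have hTP2 : IsTransportPath X G₂ a₀ (bMeas y n) := by
    refine ⟨?_, hVX, haV, hbV, acyclic_of_le (undirected_mono hE₂) hacyc, hbalv⟩
    intro f hf
    exact hOK f (hE₂ hf)
  have hcmp := hopt G₂ ⟨a₀, ha₀, haX, hmass, hTP2⟩
  have hsplit := Finset.sum_sdiff (f := fun f => G.w f ^ α * dist f.1 f.2)
    (Finset.filter_subset (fun f => G.undirected.Reachable f.1 e.1) G.E)
  have hterm : 0 < G.w e ^ α * dist e.1 e.2 :=
    mul_pos (Real.rpow_pos_of_pos (hOK e he).2.2.2 α) (dist_pos.mpr (hOK e he).2.2.1)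
  have hCE : G.w e ^ α * dist e.1 e.2 ≤ ∑ f ∈ compE G e.1, G.w f ^ α * dist f.1 f.2 := by
    apply Finset.single_le_sum _ (mem_compE.mpr ⟨he, SimpleGraph.Reachable.refl _⟩)
    intro f hf
    exact mul_nonneg (Real.rpow_nonneg (le_of_lt (hOK f (mem_compE.mp hf).1).2.2.2) _)
      dist_nonneg
  have hc2 : WDG.cost α G₂ + ∑ f ∈ compE G e.1, G.w f ^ α * dist f.1 f.2 = WDG.cost α G := by
    have hrfl : WDG.cost α G₂ = ∑ f ∈ G.E \ compE G e.1, G.w f ^ α * dist f.1 f.2 := rfl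
    rw [hrfl]
    unfold compE
    exact hsplit
  linarith

lemma no_two_active {k ℓ : ℕ} {X : Set (Pt m)} {α : ℝ} {x : Fin k → Pt m}
    {y : Fin ℓ → Pt m} {n : Fin ℓ → ℝ} {G : WDG m} {a₀ : Pt m →₀ ℝ}
    (hα0 : 0 ≤ α) (hα1 : α < 1)
    (hTP : IsTransportPath X G a₀ (bMeas y n))
    (ha₀ : ∀ z, 0 ≤ a₀ z) (haX : ↑a₀.support ⊆ Set.range x) (hmass : massOf a₀ = 1)
    (hopt : ∀ G', IsAllocPath X x y n G' → WDG.cost α G ≤ WDG.cost α G')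
    (hn : ∀ j, 0 < n j) :
    ∀ p q : Pt m, p ∈ Set.range x → q ∈ Set.range x → 0 < a₀ p → 0 < a₀ q →
      G.undirected.Reachable p q → p = q := by
  intro p q hpr hqr hap haq hreach
  by_contra hne
  have hOK := hTP.1
  have hVX := hTP.2.1
  have haV := hTP.2.2.1
  have hbV := hTP.2.2.2.1
  have hacyc := hTP.2.2.2.2.1
  have hbal := hTP.2.2.2.2.2
  have hpV : p ∈ G.V := haV p (Finsupp.mem_support_iff.mpr (ne_of_gt hap))
  have hqV : q ∈ G.V := haV q (Finsupp.mem_support_iff.mpr (ne_of_gt haq))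
  rcases eq_or_lt_of_le hα0 with hα | hα
  · -- the case α = 0
    subst hα
    have hAP := ap_free hTP ha₀ haX hmass hopt
    obtain ⟨z, hzV, hza, hzin, hzreach⟩ := exists_source hOK hacyc hAP hbal
      (fun v => bMeas_nonneg hn v)
      ((G.V.filter (fun u =>
        Relation.ReflTransGen (fun u v => (u,v) ∈ G.E) u p)).card) p hpV (le_refl _)
      (Or.inr hap)
    have hzr : z ∈ Set.range x :=
      haX (Finset.mem_coe.mpr (Finsupp.mem_support_iff.mpr (ne_of_gt hza)))
    set s' : Pt m := if z = p then q else p with hs'def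
    have hzs' : z ≠ s' := by
      by_cases h : z = p
      · rw [hs'def, if_pos h, h]; exact hne
      · rw [hs'def, if_neg h]; exact h
    have hs'a : 0 < a₀ s' := by
      by_cases h : z = p
      · rw [hs'def, if_pos h]; exact haq
      · rw [hs'def, if_neg h]; exact hap
    have hs'r : s' ∈ Set.range x := by
      by_cases h : z = p
      · rw [hs'def, if_pos h]; exact hqr
      · rw [hs'def, if_neg h]; exact hpr
    have hs'V : s' ∈ G.V := haV s' (Finsupp.mem_support_iff.mpr (ne_of_gt hs'a))
    have hreach2 : G.undirected.Reachable z s' := by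
      by_cases h : z = p
      · rw [hs'def, if_pos h]; exact hzreach.trans hreach
      · rw [hs'def, if_neg h]; exact hzreach
    obtain ⟨W0⟩ := hreach2
    set W : G.undirected.Walk z s' := (W0.toPath : G.undirected.Path z s').1 with hWdef
    have hWpath : W.IsPath := (W0.toPath : G.undirected.Path z s').2
    have hnd : W.edges.Nodup := hWpath.isTrail.edges_nodup
    obtain ⟨e₁, he₁E, he₁1, he₁s, he₁w⟩ := first_out_edge hOK W hnd hzs' hzin
    have he₁a : G.w e₁ ≤ a₀ z := by
      have hb := hbal z
      rw [hzin, sub_zero] at hb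
      have := bMeas_nonneg (y := y) hn z
      linarith
    set Pp := G.E.filter (fun e => sgn G W e = 1) with hPpdef
    have hPpne : Pp.Nonempty := ⟨e₁, Finset.mem_filter.mpr ⟨he₁E, he₁s⟩⟩
    obtain ⟨e₀, he₀, he₀min⟩ := Pp.exists_min_image G.w hPpne
    have he₀E : e₀ ∈ G.E := (Finset.mem_filter.mp he₀).1
    have he₀s : sgn G W e₀ = 1 := (Finset.mem_filter.mp he₀).2
    have he₀w : 0 < G.w e₀ := (hOK e₀ he₀E).2.2.2
    have he₀a : G.w e₀ ≤ a₀ z :=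
      le_trans (he₀min e₁ (Finset.mem_filter.mpr ⟨he₁E, he₁s⟩)) he₁a
    set t : ℝ := -G.w e₀ with htdef
    have hposall : ∀ e ∈ G.E, 0 ≤ G.w e + t * sgn G W e := by
      intro e he
      rcases sgn_cases W hnd e with h | h | h
      · rw [h, mul_zero, add_zero]; exact le_of_lt (hOK e he).2.2.2
      · rw [h, mul_one, htdef]
        have := he₀min e (Finset.mem_filter.mpr ⟨he, h⟩)
        linarith
      · rw [h, htdef]
        have := (hOK e he).2.2.2
        nlinarith
    have halloc := perturb_alloc hTP haX hmass hzr hs'r hzs' hzV hs'V W t hposall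
      (fun z' => Or.inr (Or.inr (ha₀ z')))
      (by rw [htdef]; linarith) (by rw [htdef]; linarith)
    have hcmp := hopt _ halloc
    have hzero : G.w e₀ + t * sgn G W e₀ = 0 := by rw [he₀s, htdef]; ring
    have hbound := wmod_cost_le_erase (α := 0) hposall he₀E hzero
    have hc1 : ∑ e ∈ G.E.erase e₀, (G.w e + t * sgn G W e) ^ (0:ℝ) * dist e.1 e.2
        = ∑ e ∈ G.E.erase e₀, dist e.1 e.2 :=
      Finset.sum_congr rfl (fun e _ => by rw [Real.rpow_zero, one_mul])
    have hc2 : WDG.cost 0 G = ∑ e ∈ G.E, dist e.1 e.2 := by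
      unfold WDG.cost
      exact Finset.sum_congr rfl (fun e _ => by rw [Real.rpow_zero, one_mul])
    have hc3 := Finset.sum_erase_add G.E (fun e => dist e.1 e.2) he₀E
    have hd0 : (0:ℝ) < dist e₀.1 e₀.2 := dist_pos.mpr (hOK e₀ he₀E).2.2.1
    rw [hc1] at hbound
    rw [hc2] at hcmp
    linarith
  · -- the case 0 < α
    obtain ⟨W0⟩ := hreach
    set W : G.undirected.Walk p q := (W0.toPath : G.undirected.Path p q).1 with hWdef
    have hWpath : W.IsPath := (W0.toPath : G.undirected.Path p q).2
    have hnd : W.edges.Nodup := hWpath.isTrail.edges_nodup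
    obtain ⟨e₁, he₁E, he₁pm⟩ := exists_pm_edge W hnd hne
    obtain ⟨em, hemE, hemmin⟩ := G.E.exists_min_image G.w ⟨e₁, he₁E⟩
    have hemw : 0 < G.w em := (hOK em hemE).2.2.2
    set ε : ℝ := min (min (a₀ p) (a₀ q)) (G.w em) / 2 with hεdef
    have hmin0 : 0 < min (min (a₀ p) (a₀ q)) (G.w em) := lt_min (lt_min hap haq) hemw
    have hε : 0 < ε := by rw [hεdef]; linarith
    have hεw : ∀ e ∈ G.E, ε < G.w e := by
      intro e he
      have h1 : min (min (a₀ p) (a₀ q)) (G.w em) ≤ G.w em := min_le_right _ _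
      have h2 : G.w em ≤ G.w e := hemmin e he
      rw [hεdef]; linarith
    have hεp : ε ≤ a₀ p := by
      have h1 : min (min (a₀ p) (a₀ q)) (G.w em) ≤ a₀ p :=
        le_trans (min_le_left _ _) (min_le_left _ _)
      rw [hεdef]; linarith
    have hεq : ε ≤ a₀ q := by
      have h1 : min (min (a₀ p) (a₀ q)) (G.w em) ≤ a₀ q :=
        le_trans (min_le_left _ _) (min_le_right _ _)
      rw [hεdef]; linarith
    have hposP : ∀ e ∈ G.E, 0 ≤ G.w e + ε * sgn G W e := by
      intro e he
      rcases sgn_cases W hnd e with h | h | h <;> rw [h]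
      · rw [mul_zero, add_zero]; exact le_of_lt (hOK e he).2.2.2
      · have := hεw e he; linarith
      · have := hεw e he; linarith
    have hposM : ∀ e ∈ G.E, 0 ≤ G.w e + (-ε) * sgn G W e := by
      intro e he
      rcases sgn_cases W hnd e with h | h | h <;> rw [h]
      · rw [mul_zero, add_zero]; exact le_of_lt (hOK e he).2.2.2
      · have := hεw e he; linarith
      · have := hεw e he; linarith
    have hallocP := perturb_alloc hTP haX hmass hpr hqr hne hpV hqV W ε hposP
      (fun z' => Or.inr (Or.inr (ha₀ z'))) (by linarith) (by linarith)
    have hallocM := perturb_alloc hTP haX hmass hpr hqr hne hpV hqV W (-ε) hposM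
      (fun z' => Or.inr (Or.inr (ha₀ z'))) (by linarith) (by linarith)
    have hcmpP := le_trans (hopt _ hallocP) (wmod_cost_le hposP)
    have hcmpM := le_trans (hopt _ hallocM) (wmod_cost_le hposM)
    -- strict concavity contradiction
    have hkey : (1/2) * (∑ e ∈ G.E, (G.w e + ε * sgn G W e) ^ α * dist e.1 e.2)
        + (1/2) * (∑ e ∈ G.E, (G.w e + (-ε) * sgn G W e) ^ α * dist e.1 e.2)
        < WDG.cost α G := by
      unfold WDG.cost
      rw [Finset.mul_sum, Finset.mul_sum, ← Finset.sum_add_distrib]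
      apply Finset.sum_lt_sum
      · intro e he
        have hcomb : (1/2) * (G.w e + ε * sgn G W e) + (1/2) * (G.w e + (-ε) * sgn G W e)
            = G.w e := by ring
        have := rpow_combo_ge (le_of_lt hα) (le_of_lt hα1) (hposP e he) (hposM e he)
          (by norm_num : (0:ℝ) ≤ 1/2) (by norm_num : (0:ℝ) ≤ 1/2) (by norm_num)
        rw [hcomb] at this
        calc (1/2) * ((G.w e + ε * sgn G W e) ^ α * dist e.1 e.2)
              + (1/2) * ((G.w e + (-ε) * sgn G W e) ^ α * dist e.1 e.2)
            = ((1/2) * (G.w e + ε * sgn G W e) ^ α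
                + (1/2) * (G.w e + (-ε) * sgn G W e) ^ α) * dist e.1 e.2 := by ring
          _ ≤ G.w e ^ α * dist e.1 e.2 := mul_le_mul_of_nonneg_right this dist_nonneg
      · refine ⟨e₁, he₁E, ?_⟩
        have hABne : G.w e₁ + ε * sgn G W e₁ ≠ G.w e₁ + (-ε) * sgn G W e₁ := by
          rcases he₁pm with h | h <;> rw [h] <;> intro hcon <;> nlinarith
        have hcomb : (1/2) * (G.w e₁ + ε * sgn G W e₁) + (1/2) * (G.w e₁ + (-ε) * sgn G W e₁)
            = G.w e₁ := by ring
        have hlt := rpow_combo_gt hα hα1 (hposP e₁ he₁E) (hposM e₁ he₁E) hABne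
        rw [hcomb] at hlt
        have hd1 : (0:ℝ) < dist e₁.1 e₁.2 := dist_pos.mpr (hOK e₁ he₁E).2.2.1
        calc (1/2) * ((G.w e₁ + ε * sgn G W e₁) ^ α * dist e₁.1 e₁.2)
              + (1/2) * ((G.w e₁ + (-ε) * sgn G W e₁) ^ α * dist e₁.1 e₁.2)
            = ((1/2) * (G.w e₁ + ε * sgn G W e₁) ^ α
                + (1/2) * (G.w e₁ + (-ε) * sgn G W e₁) ^ α) * dist e₁.1 e₁.2 := by ring
          _ < G.w e₁ ^ α * dist e₁.1 e₁.2 := mul_lt_mul_of_pos_right hlt hd1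
    linarith

lemma bPart_apply {k ℓ : ℕ} (y : Fin ℓ → Pt m) (n : Fin ℓ → ℝ) (S : Fin ℓ → Fin k)
    (i : Fin k) (v : Pt m) :
    bPart y n S i v = ∑ j ∈ Finset.univ.filter (fun j => S j = i),
      if y j = v then n j else 0 := by
  unfold bPart
  rw [Finsupp.finset_sum_apply]
  exact Finset.sum_congr rfl (fun j _ => Finsupp.single_apply)

lemma bPart_support {k ℓ : ℕ} {y : Fin ℓ → Pt m} {n : Fin ℓ → ℝ} {S : Fin ℓ → Fin k}
    {i : Fin k} {v : Pt m} (h : bPart y n S i v ≠ 0) : ∃ j, S j = i ∧ y j = v := by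
  by_contra hno
  push_neg at hno
  apply h
  rw [bPart_apply]
  apply Finset.sum_eq_zero
  intro j hj
  rw [if_neg (hno j (Finset.mem_filter.mp hj).2)]

lemma cost_empty (α : ℝ) (V0 : Finset (Pt m)) (w0 : Pt m × Pt m → ℝ) :
    WDG.cost α ⟨V0, ∅, w0⟩ = 0 := by
  unfold WDG.cost
  exact Finset.sum_empty

lemma emptyWDG_TP (X : Set (Pt m)) :
    IsTransportPath X (⟨∅, ∅, fun _ => 0⟩ : WDG m) 0 0 := by
  refine ⟨?_, ?_, ?_, ?_, acyclic_of_empty rfl, ?_⟩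
  · intro e he
    exact absurd he (Finset.notMem_empty e)
  · intro v hv
    exact absurd hv (by simp)
  · intro z hz
    simp at hz
  · intro z hz
    simp at hz
  · intro v
    show (∑ e ∈ Finset.filter _ ∅, _) - (∑ e ∈ Finset.filter _ ∅, _)
      = (0 : Pt m →₀ ℝ) v - (0 : Pt m →₀ ℝ) v
    rw [Finset.filter_empty, Finset.filter_empty, Finset.sum_empty]
    simp

lemma dCost_zero (X : Set (Pt m)) (α : ℝ) : dCost X α 0 0 = 0 := by
  have hmem : (0:ℝ) ∈ WDG.cost α '' {G : WDG m | IsTransportPath X G 0 0} :=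
    ⟨⟨∅, ∅, fun _ => 0⟩, emptyWDG_TP X, cost_empty α ∅ _⟩
  have hlb : ∀ c ∈ WDG.cost α '' {G : WDG m | IsTransportPath X G 0 0}, (0:ℝ) ≤ c := by
    rintro c ⟨G'', hG'', rfl⟩
    exact cost_nonneg hG''.1
  unfold dCost
  exact le_antisymm (csInf_le ⟨0, hlb⟩ hmem) (le_csInf ⟨0, hmem⟩ hlb)

end Stmt6Aux

open Stmt6Aux

/-- An optimal allocation path `G` admits an assignment map `S`
with `E_α(S) = M_α(G)`, and `G` decomposes as a disjoint union of subgraphs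
`G_i`, with `M_α(G) = Σ_i M_α(G_i)`, each `G_i` (for nonempty `S⁻¹(i)`) being an
optimal transport path from `m(b_i) δ_(x_i)` to `b_i` of cost `d_α(m(b_i) δ_(x_i), b_i)`,
and `G_i` empty when `S⁻¹(i) = ∅`. -/
theorem stmt_6 {m k ℓ : ℕ} (X : Set (Pt m)) (hXc : IsCompact X) (hXconv : Convex ℝ X)
    (α : ℝ) (hα0 : 0 ≤ α) (hα1 : α < 1)
    (x : Fin k → Pt m) (hxinj : Function.Injective x) (hxX : ∀ i, x i ∈ X)
    (y : Fin ℓ → Pt m) (hyinj : Function.Injective y) (hyX : ∀ j, y j ∈ X)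
    (n : Fin ℓ → ℝ) (hn : ∀ j, 0 < n j) (hnsum : ∑ j, n j = 1)
    (G : WDG m) (hG : IsOptimalAllocPath X α x y n G) :
    ∃ S : Fin ℓ → Fin k,
      Ealpha X α x y n S = WDG.cost α G ∧
      ∃ Gi : Fin k → WDG m, IsDisjointUnion G Gi ∧
        WDG.cost α G = ∑ i, WDG.cost α (Gi i) ∧
        ∀ i : Fin k,
          ((∃ j, S j = i) →
            IsOptimalTP X α (Gi i) (Finsupp.single (x i) (mB n S i)) (bPart y n S i) ∧
            WDG.cost α (Gi i) =
              dCost X α (Finsupp.single (x i) (mB n S i)) (bPart y n S i)) ∧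
          ((¬ ∃ j, S j = i) → (Gi i).V = ∅ ∧ (Gi i).E = ∅) := by
  classical
  obtain ⟨⟨a₀, ha₀, haX, hmass, hTP⟩, hopt⟩ := hG
  have hOK := hTP.1
  have hVX := hTP.2.1
  have haV := hTP.2.2.1
  have hbV := hTP.2.2.2.1
  have hacyc := hTP.2.2.2.2.1
  have hbal := hTP.2.2.2.2.2
  have hα1' : α ≤ 1 := le_of_lt hα1
  have hbnn : ∀ v, 0 ≤ bMeas y n v := fun v => bMeas_nonneg hn v
  have hL2 : ∀ i i' : Fin k, 0 < a₀ (x i) → 0 < a₀ (x i') →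
      G.undirected.Reachable (x i) (x i') → i = i' := fun i i' h1 h2 h3 =>
    hxinj (no_two_active hα0 hα1 hTP ha₀ haX hmass hopt hn (x i) (x i')
      ⟨i, rfl⟩ ⟨i', rfl⟩ h1 h2 h3)
  have hyVmem : ∀ j, y j ∈ G.V := fun j => hbV (y j) (Finsupp.mem_support_iff.mpr (by
    rw [bMeas_atom hyinj]; exact ne_of_gt (hn j)))
  have hsumb : ∀ r : Pt m, ∑ v ∈ comp G r, bMeas y n v
      = ∑ j, if y j ∈ comp G r then n j else 0 := by
    intro r
    rw [Finset.sum_congr rfl (fun v _ => bMeas_apply y n v)]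
    rw [Finset.sum_comm]
    apply Finset.sum_congr rfl
    intro j _
    exact Finset.sum_ite_eq (comp G r) (y j) (fun _ => n j)
  have exS : ∀ j : Fin ℓ, ∃ i : Fin k, 0 < a₀ (x i) ∧ G.undirected.Reachable (x i) (y j) := by
    intro j
    have hmem : y j ∈ comp G (y j) :=
      mem_comp.mpr ⟨hyVmem j, SimpleGraph.Reachable.refl _⟩
    have hsum := comp_mass hOK hbal (y j)
    have h1 : bMeas y n (y j) ≤ ∑ v ∈ comp G (y j), bMeas y n v :=
      Finset.single_le_sum (fun v _ => hbnn v) hmem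
    rw [bMeas_atom hyinj] at h1
    have hapos : 0 < ∑ v ∈ comp G (y j), a₀ v := by
      rw [hsum]; linarith [hn j]
    have hex : ∃ v ∈ comp G (y j), a₀ v ≠ 0 := by
      by_contra hno
      push_neg at hno
      rw [Finset.sum_eq_zero hno] at hapos
      exact lt_irrefl 0 hapos
    obtain ⟨v, hv, hva⟩ := hex
    obtain ⟨i, hi⟩ := haX (Finset.mem_coe.mpr (Finsupp.mem_support_iff.mpr hva))
    refine ⟨i, ?_, ?_⟩
    · rw [hi]; exact lt_of_le_of_ne (ha₀ v) (Ne.symm hva)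
    · rw [hi]; exact (mem_comp.mp hv).2
  set S : Fin ℓ → Fin k := fun j => (exS j).choose with hSdef
  have hS1 : ∀ j, 0 < a₀ (x (S j)) := fun j => (exS j).choose_spec.1
  have hS2 : ∀ j, G.undirected.Reachable (x (S j)) (y j) := fun j => (exS j).choose_spec.2
  have hSuniq : ∀ (j : Fin ℓ) (i : Fin k), 0 < a₀ (x i) →
      G.undirected.Reachable (x i) (y j) → S j = i := fun j i h1 h2 =>
    hL2 (S j) i (hS1 j) h1 ((hS2 j).trans h2.symm)
  have hxV : ∀ i : Fin k, 0 < a₀ (x i) → x i ∈ G.V := fun i h =>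
    haV _ (Finsupp.mem_support_iff.mpr (ne_of_gt h))
  have hyc : ∀ (i : Fin k), 0 < a₀ (x i) →
      ∀ j, (y j ∈ comp G (x i) ↔ S j = i) := by
    intro i hi j
    constructor
    · intro hmem
      exact hSuniq j i hi (mem_comp.mp hmem).2.symm
    · intro hS
      refine mem_comp.mpr ⟨hyVmem j, ?_⟩
      rw [← hS]
      exact (hS2 j).symm
  have hact_iff : ∀ i : Fin k, (0 < a₀ (x i) ↔ ∃ j, S j = i) := by
    intro i
    constructor
    · intro hi
      have hmem : x i ∈ comp G (x i) :=
        mem_comp.mpr ⟨hxV i hi, SimpleGraph.Reachable.refl _⟩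
      have hsum := comp_mass hOK hbal (x i)
      have h1 : a₀ (x i) ≤ ∑ v ∈ comp G (x i), a₀ v :=
        Finset.single_le_sum (fun v _ => ha₀ v) hmem
      have hex : ∃ v ∈ comp G (x i), bMeas y n v ≠ 0 := by
        by_contra hno
        push_neg at hno
        rw [Finset.sum_eq_zero hno] at hsum
        linarith
      obtain ⟨v, hv, hvb⟩ := hex
      obtain ⟨j, hj⟩ := bMeas_support hvb
      refine ⟨j, (hyc i hi j).mp ?_⟩
      rw [hj]; exact hv
    · rintro ⟨j, rfl⟩
      exact hS1 j
  have haz : ∀ (i : Fin k), 0 < a₀ (x i) →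
      ∀ v ∈ comp G (x i), v ≠ x i → a₀ v = 0 := by
    intro i hi v hv hne
    by_contra hva
    obtain ⟨i'', hi''⟩ := haX (Finset.mem_coe.mpr (Finsupp.mem_support_iff.mpr hva))
    have h2 : 0 < a₀ (x i'') := by rw [hi'']; exact lt_of_le_of_ne (ha₀ v) (Ne.symm hva)
    have h3 : G.undirected.Reachable (x i'') (x i) := by
      rw [hi'']; exact (mem_comp.mp hv).2
    have h4 := hL2 i'' i h2 hi h3
    apply hne
    rw [← hi'', h4]
  have haxi : ∀ i : Fin k, 0 < a₀ (x i) → a₀ (x i) = mB n S i := by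
    intro i hi
    have hsum := comp_mass hOK hbal (x i)
    have hmem : x i ∈ comp G (x i) :=
      mem_comp.mpr ⟨hxV i hi, SimpleGraph.Reachable.refl _⟩
    have hA : ∑ v ∈ comp G (x i), a₀ v = a₀ (x i) :=
      Finset.sum_eq_single_of_mem (x i) hmem (fun v hv hne => haz i hi v hv hne)
    have hB : ∑ v ∈ comp G (x i), bMeas y n v = mB n S i := by
      rw [hsumb (x i)]
      unfold mB
      rw [Finset.sum_filter]
      apply Finset.sum_congr rfl
      intro j _
      by_cases h : S j = i
      · rw [if_pos ((hyc i hi j).mpr h), if_pos h]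
      · rw [if_neg (fun hm => h ((hyc i hi j).mp hm)), if_neg h]
    rw [← hA, hsum, hB]
  set Gi : Fin k → WDG m := fun i =>
    if 0 < a₀ (x i) then ⟨comp G (x i), compE G (x i), G.w⟩
    else ⟨∅, ∅, G.w⟩ with hGidef
  have hGiact : ∀ i : Fin k, 0 < a₀ (x i) →
      Gi i = ⟨comp G (x i), compE G (x i), G.w⟩ := by
    intro i hi
    simp only [hGidef]
    rw [if_pos hi]
  have hGiinact : ∀ i : Fin k, ¬ 0 < a₀ (x i) → Gi i = ⟨∅, ∅, G.w⟩ := by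
    intro i hi
    simp only [hGidef]
    rw [if_neg hi]
  have hbalGi : ∀ (i : Fin k), 0 < a₀ (x i) → ∀ v : Pt m,
      (∑ e ∈ (compE G (x i)).filter (fun e => e.1 = v), G.w e)
        - (∑ e ∈ (compE G (x i)).filter (fun e => e.2 = v), G.w e)
      = (Finsupp.single (x i) (mB n S i)) v - (bPart y n S i) v := by
    intro i hi v
    by_cases hv : v ∈ comp G (x i)
    · have hf1 : (compE G (x i)).filter (fun e => e.1 = v)
          = G.E.filter (fun e => e.1 = v) := by
        apply Finset.ext
        intro e
        rw [Finset.mem_filter, Finset.mem_filter, mem_compE]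
        constructor
        · rintro ⟨⟨h1, _⟩, h2⟩; exact ⟨h1, h2⟩
        · rintro ⟨h1, h2⟩
          exact ⟨⟨h1, h2 ▸ (mem_comp.mp hv).2⟩, h2⟩
      have hf2 : (compE G (x i)).filter (fun e => e.2 = v)
          = G.E.filter (fun e => e.2 = v) := by
        apply Finset.ext
        intro e
        rw [Finset.mem_filter, Finset.mem_filter, mem_compE]
        constructor
        · rintro ⟨⟨h1, _⟩, h2⟩; exact ⟨h1, h2⟩
        · rintro ⟨h1, h2⟩
          refine ⟨⟨h1, ?_⟩, h2⟩
          have hadj := adj_of_mem hOK h1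
          rw [h2] at hadj
          exact hadj.reachable.trans (mem_comp.mp hv).2
      rw [hf1, hf2]
      have hL : (∑ e ∈ G.E.filter (fun e => e.1 = v), G.w e)
          - (∑ e ∈ G.E.filter (fun e => e.2 = v), G.w e) = a₀ v - bMeas y n v := hbal v
      rw [hL]
      have hbeq : bMeas y n v = bPart y n S i v := by
        rw [bMeas_apply, bPart_apply]
        rw [Finset.sum_filter]
        apply Finset.sum_congr rfl
        intro j _
        by_cases hjv : y j = v
        · have hjc : S j = i := (hyc i hi j).mp (by rw [hjv]; exact hv)
          rw [if_pos hjc]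
        · by_cases hjc : S j = i <;> simp [hjv, hjc]
      have haeq : a₀ v = (Finsupp.single (x i) (mB n S i)) v := by
        rw [Finsupp.single_apply]
        by_cases hvx : x i = v
        · rw [if_pos hvx, ← hvx]
          exact haxi i hi
        · rw [if_neg hvx]
          exact haz i hi v hv (fun h => hvx h.symm)
      rw [haeq, hbeq]
    · have hf1 : (compE G (x i)).filter (fun e => e.1 = v) = ∅ := by
        apply Finset.eq_empty_iff_forall_notMem.mpr
        intro e he
        rw [Finset.mem_filter, mem_compE] at he
        apply hv
        rw [← he.2]
        exact mem_comp.mpr ⟨(hOK e he.1.1).1, he.1.2⟩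
      have hf2 : (compE G (x i)).filter (fun e => e.2 = v) = ∅ := by
        apply Finset.eq_empty_iff_forall_notMem.mpr
        intro e he
        rw [Finset.mem_filter] at he
        apply hv
        rw [← he.2]
        exact mem_comp.mpr ⟨(hOK e (mem_compE.mp he.1).1).2.1, compE_snd hOK he.1⟩
      rw [hf1, hf2, Finset.sum_empty]
      have h1 : (Finsupp.single (x i) (mB n S i)) v = 0 := by
        rw [Finsupp.single_apply, if_neg]
        intro h
        apply hv
        rw [← h]
        exact mem_comp.mpr ⟨hxV i hi, SimpleGraph.Reachable.refl _⟩
      have h2 : bPart y n S i v = 0 := by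
        by_contra hbp
        obtain ⟨j, hji, hjv⟩ := bPart_support hbp
        apply hv
        rw [← hjv]
        exact (hyc i hi j).mpr hji
      rw [h1, h2]
  have hTPi : ∀ i : Fin k, 0 < a₀ (x i) →
      IsTransportPath X (Gi i) (Finsupp.single (x i) (mB n S i)) (bPart y n S i) := by
    intro i hi
    rw [hGiact i hi]
    refine ⟨?_, ?_, ?_, ?_, ?_, ?_⟩
    · intro e he
      have heE := (mem_compE.mp he).1
      have hre := (mem_compE.mp he).2
      refine ⟨?_, ?_, (hOK e heE).2.2.1, (hOK e heE).2.2.2⟩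
      · exact mem_comp.mpr ⟨(hOK e heE).1, hre⟩
      · exact mem_comp.mpr ⟨(hOK e heE).2.1, compE_snd hOK he⟩
    · intro v hv
      exact hVX (Finset.mem_coe.mpr (mem_comp.mp (Finset.mem_coe.mp hv)).1)
    · intro z hz
      have h := Finsupp.support_single_subset hz
      rw [Finset.mem_singleton] at h
      rw [h]
      exact mem_comp.mpr ⟨hxV i hi, SimpleGraph.Reachable.refl _⟩
    · intro z hz
      rw [Finsupp.mem_support_iff] at hz
      obtain ⟨j, hji, hjv⟩ := bPart_support hz
      rw [← hjv]
      exact (hyc i hi j).mpr hji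
    · exact acyclic_of_le (undirected_mono (Finset.filter_subset _ _)) hacyc
    · intro v
      exact hbalGi i hi v
  have hsubE : ∀ i : Fin k, (Gi i).E ⊆ G.E := by
    intro i
    by_cases hi : 0 < a₀ (x i)
    · rw [hGiact i hi]; exact Finset.filter_subset _ _
    · rw [hGiinact i hi]; exact Finset.empty_subset _
  have hpart : G.E = Finset.univ.biUnion (fun i => (Gi i).E) := by
    apply Finset.ext
    intro e
    constructor
    · intro he
      obtain ⟨j, hj⟩ := comp_has_demand hTP ha₀ haX hmass hopt e he
      have hre : G.undirected.Reachable e.1 (x (S j)) := hj.symm.trans (hS2 j).symm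
      rw [Finset.mem_biUnion]
      refine ⟨S j, Finset.mem_univ _, ?_⟩
      rw [hGiact (S j) (hS1 j)]
      exact mem_compE.mpr ⟨he, hre⟩
    · intro he
      rw [Finset.mem_biUnion] at he
      obtain ⟨i, _, hei⟩ := he
      exact hsubE i hei
  have hdisjV : ∀ i i' : Fin k, i ≠ i' → Disjoint (Gi i).V (Gi i').V := by
    intro i i' hne
    rw [Finset.disjoint_left]
    intro v hv hv'
    by_cases hi : 0 < a₀ (x i)
    · by_cases hi' : 0 < a₀ (x i')
      · rw [hGiact i hi] at hv
        rw [hGiact i' hi'] at hv'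
        have h3 : G.undirected.Reachable (x i) (x i') :=
          ((mem_comp.mp hv).2.symm).trans (mem_comp.mp hv').2
        exact hne (hL2 i i' hi hi' h3)
      · rw [hGiinact i' hi'] at hv'
        exact absurd hv' (Finset.notMem_empty v)
    · rw [hGiinact i hi] at hv
      exact absurd hv (Finset.notMem_empty v)
  have hEdisj : Set.PairwiseDisjoint (↑(Finset.univ : Finset (Fin k)))
      (fun i => (Gi i).E) := by
    intro i _ i' _ hne
    show Disjoint (Gi i).E (Gi i').E
    refine Finset.disjoint_left.mpr ?_
    intro e he he'
    by_cases hi : 0 < a₀ (x i)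
    · by_cases hi' : 0 < a₀ (x i')
      · rw [hGiact i hi] at he
        rw [hGiact i' hi'] at he'
        have h3 : G.undirected.Reachable (x i) (x i') :=
          ((mem_compE.mp he).2.symm).trans (mem_compE.mp he').2
        exact hne (hL2 i i' hi hi' h3)
      · rw [hGiinact i' hi'] at he'
        exact absurd he' (Finset.notMem_empty e)
    · rw [hGiinact i hi] at he
      exact absurd he (Finset.notMem_empty e)
  have hGiw : ∀ i : Fin k, (Gi i).w = G.w := by
    intro i
    by_cases hi : 0 < a₀ (x i)
    · rw [hGiact i hi]
    · rw [hGiinact i hi]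
  have hcost_eq : ∀ i : Fin k, WDG.cost α (Gi i)
      = ∑ e ∈ (Gi i).E, G.w e ^ α * dist e.1 e.2 := by
    intro i
    unfold WDG.cost
    rw [hGiw i]
  have hcostsum : WDG.cost α G = ∑ i, WDG.cost α (Gi i) := by
    have h0 : WDG.cost α G = ∑ e ∈ Finset.univ.biUnion (fun i => (Gi i).E),
        G.w e ^ α * dist e.1 e.2 := by
      unfold WDG.cost
      rw [← hpart]
    rw [h0, Finset.sum_biUnion hEdisj]
    apply Finset.sum_congr rfl
    intro i _
    rw [hcost_eq i]
  have hopti : ∀ i : Fin k, 0 < a₀ (x i) → ∀ G' : WDG m,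
      IsTransportPath X G' (Finsupp.single (x i) (mB n S i)) (bPart y n S i) →
      WDG.cost α (Gi i) ≤ WDG.cost α G' := by
    intro i hi G' hG'
    by_contra hlt
    push_neg at hlt
    obtain ⟨hOK', hVX', haV', hbV', hacyc', hbal'⟩ := hG'
    set CE : Finset (Pt m × Pt m) := compE G (x i) with hCE
    set E₂ : Finset (Pt m × Pt m) := G.E \ CE with hE₂
    set wH : Pt m × Pt m → ℝ :=
      fun e => (if e ∈ G'.E then G'.w e else 0) + (if e ∈ E₂ then G.w e else 0) with hwH
    set H : WDG m := ⟨G'.V ∪ G.V, G'.E ∪ E₂, wH⟩ with hH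
    have hCEsub : CE ⊆ G.E := Finset.filter_subset _ _
    have hE₂sub : E₂ ⊆ G.E := Finset.sdiff_subset
    have hw1 : ∀ e, 0 ≤ (if e ∈ G'.E then G'.w e else 0) := by
      intro e
      split_ifs with h
      · exact le_of_lt (hOK' e h).2.2.2
      · exact le_refl 0
    have hw2 : ∀ e, 0 ≤ (if e ∈ E₂ then G.w e else 0) := by
      intro e
      split_ifs with h
      · exact le_of_lt (hOK e (hE₂sub h)).2.2.2
      · exact le_refl 0
    have hHOK : H.edgesOK := by
      intro e he
      have he' : e ∈ G'.E ∪ E₂ := he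
      rw [Finset.mem_union] at he'
      rcases he' with h | h
      · refine ⟨Finset.mem_union_left _ (hOK' e h).1,
          Finset.mem_union_left _ (hOK' e h).2.1, (hOK' e h).2.2.1, ?_⟩
        show 0 < wH e
        have h2 := hw2 e
        have h3 := (hOK' e h).2.2.2
        rw [hwH]
        simp only
        rw [if_pos h]
        linarith
      · refine ⟨Finset.mem_union_right _ (hOK e (hE₂sub h)).1,
          Finset.mem_union_right _ (hOK e (hE₂sub h)).2.1, (hOK e (hE₂sub h)).2.2.1, ?_⟩
        show 0 < wH e
        have h2 := hw1 e
        have h3 := (hOK e (hE₂sub h)).2.2.2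
        rw [hwH]
        simp only
        rw [if_pos h]
        linarith
    have hsplitsum : ∀ (P : Pt m × Pt m → Prop) (_ : DecidablePred P),
        (∑ e ∈ (G'.E ∪ E₂).filter P, wH e)
        = (∑ e ∈ G'.E.filter P, G'.w e) + (∑ e ∈ E₂.filter P, G.w e) := by
      intro P _
      have h1 : (∑ e ∈ (G'.E ∪ E₂).filter P, wH e)
          = (∑ e ∈ (G'.E ∪ E₂).filter P, if e ∈ G'.E then G'.w e else 0)
            + (∑ e ∈ (G'.E ∪ E₂).filter P, if e ∈ E₂ then G.w e else 0) := by
        rw [← Finset.sum_add_distrib]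
      rw [h1]
      congr 1
      · rw [← Finset.sum_subset
          (Finset.filter_subset_filter P Finset.subset_union_left)
          (fun e _ hne => if_neg (fun hmem => hne
            (Finset.mem_filter.mpr ⟨hmem, by
              have := Finset.mem_filter.mp (by assumption : e ∈ (G'.E ∪ E₂).filter P)
              exact this.2⟩)))]
        apply Finset.sum_congr rfl
        intro e he
        rw [if_pos (Finset.mem_filter.mp he).1]
      · rw [← Finset.sum_subset
          (Finset.filter_subset_filter P Finset.subset_union_right)
          (fun e _ hne => if_neg (fun hmem => hne
            (Finset.mem_filter.mpr ⟨hmem, by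
              have := Finset.mem_filter.mp (by assumption : e ∈ (G'.E ∪ E₂).filter P)
              exact this.2⟩)))]
        apply Finset.sum_congr rfl
        intro e he
        rw [if_pos (Finset.mem_filter.mp he).1]
    have hbalH : ∀ v, H.outflow v - H.inflow v = a₀ v - bMeas y n v := by
      intro v
      have hout : H.outflow v
          = (∑ e ∈ G'.E.filter (fun e => e.1 = v), G'.w e)
            + (∑ e ∈ E₂.filter (fun e => e.1 = v), G.w e) := by
        show (∑ e ∈ (G'.E ∪ E₂).filter (fun e => e.1 = v), wH e) = _
        exact hsplitsum _ _
      have hin : H.inflow v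
          = (∑ e ∈ G'.E.filter (fun e => e.2 = v), G'.w e)
            + (∑ e ∈ E₂.filter (fun e => e.2 = v), G.w e) := by
        show (∑ e ∈ (G'.E ∪ E₂).filter (fun e => e.2 = v), wH e) = _
        exact hsplitsum _ _
      have hsd1 : (∑ e ∈ E₂.filter (fun e => e.1 = v), G.w e)
          = (∑ e ∈ G.E.filter (fun e => e.1 = v), G.w e)
            - (∑ e ∈ CE.filter (fun e => e.1 = v), G.w e) := by
        have hsub : CE.filter (fun e => e.1 = v) ⊆ G.E.filter (fun e => e.1 = v) :=
          Finset.filter_subset_filter _ hCEsub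
        have hsd := Finset.sum_sdiff (f := G.w) hsub
        have heq : E₂.filter (fun e => e.1 = v)
            = G.E.filter (fun e => e.1 = v) \ CE.filter (fun e => e.1 = v) := by
          apply Finset.ext
          intro e
          rw [Finset.mem_filter, Finset.mem_sdiff, Finset.mem_sdiff,
            Finset.mem_filter, Finset.mem_filter]
          tauto
        rw [heq]
        linarith
      have hsd2 : (∑ e ∈ E₂.filter (fun e => e.2 = v), G.w e)
          = (∑ e ∈ G.E.filter (fun e => e.2 = v), G.w e)
            - (∑ e ∈ CE.filter (fun e => e.2 = v), G.w e) := by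
        have hsub : CE.filter (fun e => e.2 = v) ⊆ G.E.filter (fun e => e.2 = v) :=
          Finset.filter_subset_filter _ hCEsub
        have hsd := Finset.sum_sdiff (f := G.w) hsub
        have heq : E₂.filter (fun e => e.2 = v)
            = G.E.filter (fun e => e.2 = v) \ CE.filter (fun e => e.2 = v) := by
          apply Finset.ext
          intro e
          rw [Finset.mem_filter, Finset.mem_sdiff, Finset.mem_sdiff,
            Finset.mem_filter, Finset.mem_filter]
          tauto
        rw [heq]
        linarith
      have h1 := hbal' v
      have h2 := hbal v
      have h3 := hbalGi i hi v
      rw [← hCE] at h3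
      have hout' : H.outflow v = (∑ e ∈ G'.E.filter (fun e => e.1 = v), G'.w e)
          + ((∑ e ∈ G.E.filter (fun e => e.1 = v), G.w e)
            - (∑ e ∈ CE.filter (fun e => e.1 = v), G.w e)) := by rw [hout, hsd1]
      have hin' : H.inflow v = (∑ e ∈ G'.E.filter (fun e => e.2 = v), G'.w e)
          + ((∑ e ∈ G.E.filter (fun e => e.2 = v), G.w e)
            - (∑ e ∈ CE.filter (fun e => e.2 = v), G.w e)) := by rw [hin, hsd2]
      have hG'of : G'.outflow v - G'.inflow v
          = (Finsupp.single (x i) (mB n S i)) v - (bPart y n S i) v := h1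
      have hGof : G.outflow v - G.inflow v = a₀ v - bMeas y n v := h2
      rw [hout', hin']
      have e1 : G'.outflow v = ∑ e ∈ G'.E.filter (fun e => e.1 = v), G'.w e := rfl
      have e2 : G'.inflow v = ∑ e ∈ G'.E.filter (fun e => e.2 = v), G'.w e := rfl
      have e3 : G.outflow v = ∑ e ∈ G.E.filter (fun e => e.1 = v), G.w e := rfl
      have e4 : G.inflow v = ∑ e ∈ G.E.filter (fun e => e.2 = v), G.w e := rfl
      rw [e1, e2] at hG'of
      rw [e3, e4] at hGof
      linarith
    obtain ⟨H', hH'TP, hH'cost⟩ := exists_acyclic_TP (X := X) hα0 hα1' H.E.card H a₀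
      (bMeas y n) (le_refl _) hHOK
      (by
        intro v hv
        have hv' : v ∈ G'.V ∪ G.V := Finset.mem_coe.mp hv
        rw [Finset.mem_union] at hv'
        rcases hv' with h | h
        · exact hVX' (Finset.mem_coe.mpr h)
        · exact hVX (Finset.mem_coe.mpr h))
      (fun z hz => Finset.mem_union_right _ (haV z hz))
      (fun z hz => Finset.mem_union_right _ (hbV z hz))
      hbalH
    have hcmp := hopt H' ⟨a₀, ha₀, haX, hmass, hH'TP⟩
    have hcostH : WDG.cost α H ≤ WDG.cost α G' + ∑ e ∈ E₂, G.w e ^ α * dist e.1 e.2 := by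
      have hstep1 : WDG.cost α H ≤ ∑ e ∈ G'.E ∪ E₂,
          ((if e ∈ G'.E then G'.w e ^ α * dist e.1 e.2 else 0)
            + (if e ∈ E₂ then G.w e ^ α * dist e.1 e.2 else 0)) := by
        apply Finset.sum_le_sum
        intro e he
        rw [Finset.mem_union] at he
        show wH e ^ α * dist e.1 e.2 ≤ _
        by_cases h1 : e ∈ G'.E <;> by_cases h2 : e ∈ E₂
        · rw [if_pos h1, if_pos h2]
          have hwe : wH e = G'.w e + G.w e := by
            rw [hwH]; simp only; rw [if_pos h1, if_pos h2]
          have hsubadd := rpow_subadd hα0 hα1' (le_of_lt (hOK' e h1).2.2.2)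
            (le_of_lt (hOK e (hE₂sub h2)).2.2.2)
          rw [hwe]
          calc (G'.w e + G.w e) ^ α * dist e.1 e.2
              ≤ (G'.w e ^ α + G.w e ^ α) * dist e.1 e.2 :=
                mul_le_mul_of_nonneg_right hsubadd dist_nonneg
            _ = G'.w e ^ α * dist e.1 e.2 + G.w e ^ α * dist e.1 e.2 := by ring
        · rw [if_pos h1, if_neg h2, add_zero]
          have hwe : wH e = G'.w e := by
            rw [hwH]; simp only; rw [if_pos h1, if_neg h2]; ring
          rw [hwe]
        · rw [if_neg h1, if_pos h2, zero_add]
          have hwe : wH e = G.w e := by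
            rw [hwH]; simp only; rw [if_neg h1, if_pos h2]; ring
          rw [hwe]
        · rcases he with h | h
          · exact absurd h h1
          · exact absurd h h2
      rw [Finset.sum_add_distrib] at hstep1
      have hstep2 : (∑ e ∈ G'.E ∪ E₂, if e ∈ G'.E then G'.w e ^ α * dist e.1 e.2 else 0)
          = WDG.cost α G' := by
        rw [← Finset.sum_subset Finset.subset_union_left (fun e _ hne => if_neg hne)]
        apply Finset.sum_congr rfl
        intro e he
        rw [if_pos he]
      have hstep3 : (∑ e ∈ G'.E ∪ E₂, if e ∈ E₂ then G.w e ^ α * dist e.1 e.2 else 0)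
          = ∑ e ∈ E₂, G.w e ^ α * dist e.1 e.2 := by
        rw [← Finset.sum_subset Finset.subset_union_right (fun e _ hne => if_neg hne)]
        apply Finset.sum_congr rfl
        intro e he
        rw [if_pos he]
      rw [hstep2, hstep3] at hstep1
      exact hstep1
    have hsplitc := Finset.sum_sdiff (f := fun e => G.w e ^ α * dist e.1 e.2) hCEsub
    have hgi : WDG.cost α (Gi i) = ∑ e ∈ CE, G.w e ^ α * dist e.1 e.2 := by
      rw [hcost_eq i, hGiact i hi, hCE]
    have hcostG : WDG.cost α G = (∑ e ∈ E₂, G.w e ^ α * dist e.1 e.2)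
        + ∑ e ∈ CE, G.w e ^ α * dist e.1 e.2 := by
      rw [hE₂]
      unfold WDG.cost
      linarith [hsplitc]
    linarith
  have hdact : ∀ i : Fin k, 0 < a₀ (x i) →
      dCost X α (Finsupp.single (x i) (mB n S i)) (bPart y n S i) = WDG.cost α (Gi i) := by
    intro i hi
    have hmem : WDG.cost α (Gi i) ∈ WDG.cost α ''
        {G'' : WDG m | IsTransportPath X G'' (Finsupp.single (x i) (mB n S i))
          (bPart y n S i)} := ⟨Gi i, hTPi i hi, rfl⟩
    have hlb : ∀ c ∈ WDG.cost α ''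
        {G'' : WDG m | IsTransportPath X G'' (Finsupp.single (x i) (mB n S i))
          (bPart y n S i)}, WDG.cost α (Gi i) ≤ c := by
      rintro c ⟨G'', hG'', rfl⟩
      exact hopti i hi G'' hG''
    exact le_antisymm (csInf_le ⟨_, hlb⟩ hmem) (le_csInf ⟨_, hmem⟩ hlb)
  have hinact_dc : ∀ i : Fin k, ¬ 0 < a₀ (x i) →
      dCost X α (Finsupp.single (x i) (mB n S i)) (bPart y n S i) = 0
        ∧ WDG.cost α (Gi i) = 0 := by
    intro i hi
    have hnoj : ∀ j ∈ Finset.univ, ¬ S j = i := fun j _ hj => hi (hj ▸ hS1 j)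
    have hfe : Finset.univ.filter (fun j => S j = i) = ∅ :=
      Finset.filter_eq_empty_iff.mpr hnoj
    have hmB : mB n S i = 0 := by unfold mB; rw [hfe, Finset.sum_empty]
    have hbP : bPart y n S i = 0 := by unfold bPart; rw [hfe, Finset.sum_empty]
    constructor
    · rw [hmB, hbP, Finsupp.single_zero]
      exact dCost_zero X α
    · rw [hGiinact i hi]
      exact cost_empty α _ _
  refine ⟨S, ?_, Gi, ⟨hdisjV, ?_, hsubE, ?_, hpart⟩, hcostsum, ?_⟩
  · unfold Ealpha
    rw [hcostsum]
    apply Finset.sum_congr rfl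
    intro i _
    by_cases hi : 0 < a₀ (x i)
    · exact hdact i hi
    · rw [(hinact_dc i hi).1, (hinact_dc i hi).2]
  · intro i
    by_cases hi : 0 < a₀ (x i)
    · rw [hGiact i hi]; exact Finset.filter_subset _ _
    · rw [hGiinact i hi]; exact Finset.empty_subset _
  · intro i e _
    rw [hGiw i]
  · intro i
    constructor
    · rintro ⟨j, hj⟩
      have hi : 0 < a₀ (x i) := hj ▸ hS1 j
      exact ⟨⟨hTPi i hi, hopti i hi⟩, (hdact i hi).symm⟩
    · intro hnex
      have hi : ¬ 0 < a₀ (x i) := fun hi => hnex ((hact_iff i).mp hi)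
      rw [hGiinact i hi]
      exact ⟨rfl, rfl⟩


end
end
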